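/- arXiv:1302.3235 — 6 statements merged into one kernel-verified Lean document; each statement's English description precedes it below -/
import Mathlib

section
/- If x₁ ≥ x₂ > 0 and d₁ ≥ d₂ > 0 satisfy x₁² + x₂² ≥ d₁² + d₂², 1/x₁² + 1/x₂² ≥ 1/d₁² + 1/d₂², and x₁x₂ = d₁d₂, then (log x₁)² + (log x₂)² ≥ (log d₁)² + (log d₂)². -/
/-- The sum of squared logarithms inequality in dimension two. -/
theorem sum_sq_log_ineq_two (x₁ x₂ d₁ d₂ : ℝ)
    (hx : x₁ ≥ x₂) (hx2 : x₂ > 0) (hd : d₁ ≥ d₂) (hd2 : d₂ > 0)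
    (h1 : x₁ ^ 2 + x₂ ^ 2 ≥ d₁ ^ 2 + d₂ ^ 2)
    (h2 : 1 / x₁ ^ 2 + 1 / x₂ ^ 2 ≥ 1 / d₁ ^ 2 + 1 / d₂ ^ 2)
    (h3 : x₁ * x₂ = d₁ * d₂) :
    (Real.log x₁) ^ 2 + (Real.log x₂) ^ 2 ≥ (Real.log d₁) ^ 2 + (Real.log d₂) ^ 2 := by
  have hx1 : x₁ > 0 := lt_of_lt_of_le hx2 hx
  have hd1 : d₁ > 0 := lt_of_lt_of_le hd2 hd
  -- ratio comparison: x₁ * d₂ ≥ x₂ * d₁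
  have hkey : x₁ * d₂ ≥ x₂ * d₁ := by
    rcases eq_or_lt_of_le (mul_le_mul hx hd hd2.le hx1.le) with heq | hlt
    · -- x₂ * d₂ = x₁ * d₁ forces x₁ = x₂ and d₁ = d₂
      have hxe : x₁ = x₂ := by nlinarith
      have hde : d₁ = d₂ := by nlinarith
      rw [hxe, hde]
    · nlinarith [mul_pos hd1 hd2, mul_pos hx1 hx2]
  -- difference of logs comparison
  have hdiff : Real.log x₁ - Real.log x₂ ≥ Real.log d₁ - Real.log d₂ := by
    rw [← Real.log_div hx1.ne' hx2.ne', ← Real.log_div hd1.ne' hd2.ne']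
    apply Real.log_le_log (by positivity)
    rw [div_le_div_iff₀ hd2 hx2]
    linarith [hkey]
  have hdiff0 : Real.log d₁ - Real.log d₂ ≥ 0 := by
    have := Real.log_le_log hd2 hd
    linarith
  have hsum : Real.log x₁ + Real.log x₂ = Real.log d₁ + Real.log d₂ := by
    rw [← Real.log_mul hx1.ne' hx2.ne', ← Real.log_mul hd1.ne' hd2.ne', h3]
  have h4 : (Real.log d₁ - Real.log d₂)^2 ≤ (Real.log x₁ - Real.log x₂)^2 := by
    nlinarith [hdiff, hdiff0]
  have h5 : (Real.log x₁ + Real.log x₂)^2 = (Real.log d₁ + Real.log d₂)^2 := by rw [hsum]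
  nlinarith [h4, h5]
end

section
/- If x₁, x₂, x₃ > 0 and d₁, d₂, d₃ > 0 satisfy x₁² + x₂² + x₃² ≥ d₁² + d₂² + d₃², 1/x₁² + 1/x₂² + 1/x₃² ≥ 1/d₁² + 1/d₂² + 1/d₃², and x₁x₂x₃ = d₁d₂d₃, then (log x₁)² + (log x₂)² + (log x₃)² ≥ (log d₁)² + (log d₂)² + (log d₃)². -/
open Real MeasureTheory Set Filter Topology

lemma log_sub_log_le {a b : ℝ} (ha : 0 < a) (hb : 0 < b) :
    Real.log a - Real.log b ≤ (a - b) / b := by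
  rw [← Real.log_div (ne_of_gt ha) (ne_of_gt hb)]
  have h := Real.log_le_sub_one_of_pos (div_pos ha hb)
  have hb' : b ≠ 0 := ne_of_gt hb
  calc Real.log (a/b) ≤ a/b - 1 := h
    _ = (a - b)/b := by field_simp

lemma abs_log_sub_log_le {a b : ℝ} (ha : 0 < a) (hb : 0 < b) :
    |Real.log a - Real.log b| ≤ |a - b| / min a b := by
  rcases le_total a b with h | h
  · have h1 : |Real.log a - Real.log b| = Real.log b - Real.log a := by
      rw [abs_sub_comm]; exact abs_of_nonneg (sub_nonneg.2 (Real.log_le_log ha h))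
    have h2 : |a - b| = b - a := by rw [abs_sub_comm]; exact abs_of_nonneg (sub_nonneg.2 h)
    rw [h1, h2, min_eq_left h]
    exact log_sub_log_le hb ha
  · have h1 : |Real.log a - Real.log b| = Real.log a - Real.log b :=
      abs_of_nonneg (sub_nonneg.2 (Real.log_le_log hb h))
    have h2 : |a - b| = a - b := abs_of_nonneg (sub_nonneg.2 h)
    rw [h1, h2, min_eq_right h]
    exact log_sub_log_le ha hb

lemma integrableOn_inv_sq_Ioi : IntegrableOn (fun t : ℝ => (t ^ 2)⁻¹) (Ioi (1:ℝ)) := by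
  have h := integrableOn_Ioi_rpow_of_lt (a := (-2:ℝ)) (by norm_num) (c := (1:ℝ)) one_pos
  apply h.congr_fun ?_ measurableSet_Ioi
  intro t ht
  have ht0 : (0:ℝ) < t := lt_trans one_pos ht
  have : t ^ (-2:ℝ) = (t ^ 2)⁻¹ := by
    rw [show (-2:ℝ) = ((-2:ℤ):ℝ) by norm_num, Real.rpow_intCast]
    rw [zpow_neg, zpow_two, sq]
  simpa using this

lemma integrableOn_of_bounds {f : ℝ → ℝ} {C : ℝ}
    (hm : AEStronglyMeasurable f (volume.restrict (Ioi 0)))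
    (h1 : ∀ t ∈ Ioc (0:ℝ) 1, |f t| ≤ C)
    (h2 : ∀ t ∈ Ioi (1:ℝ), |f t| ≤ C / t ^ 2) :
    IntegrableOn f (Ioi 0) := by
  have hsplit : (Ioi (0:ℝ)) = Ioc 0 1 ∪ Ioi 1 := by
    rw [Set.Ioc_union_Ioi_eq_Ioi]; norm_num
  have hm1 : AEStronglyMeasurable f (volume.restrict (Ioc (0:ℝ) 1)) :=
    hm.mono_measure (Measure.restrict_mono Ioc_subset_Ioi_self le_rfl)
  have hm2 : AEStronglyMeasurable f (volume.restrict (Ioi (1:ℝ))) :=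
    hm.mono_measure (Measure.restrict_mono (Ioi_subset_Ioi one_pos.le) le_rfl)
  have hC : 0 ≤ C := le_trans (abs_nonneg _) (h1 1 (by norm_num))
  rw [hsplit]
  refine MeasureTheory.IntegrableOn.union ?_ ?_
  · exact ⟨hm1, HasFiniteIntegral.restrict_of_bounded (C := C) measure_Ioc_lt_top
      ((ae_restrict_iff' measurableSet_Ioc).2 (Filter.Eventually.of_forall
        (fun t ht => by simpa using h1 t ht)))⟩
  · refine Integrable.mono (integrableOn_inv_sq_Ioi.const_mul C) hm2 ?_
    refine (ae_restrict_iff' measurableSet_Ioi).2 (Filter.Eventually.of_forall fun t ht => ?_)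
    have ht0 : (0:ℝ) < t := lt_trans one_pos ht
    rw [Real.norm_eq_abs, Real.norm_eq_abs,
      abs_of_nonneg (mul_nonneg hC (by positivity))]
    exact (h2 t ht).trans_eq (div_eq_mul_inv C _)

noncomputable def Gfun (y t : ℝ) : ℝ :=
  (Real.log (y + t) - Real.log (1 + t)) / t - Real.log y / (t * (1 + t))

noncomputable def Gder (y t : ℝ) : ℝ := (y - 1) / (y * (1 + t) * (y + t))

lemma Gfun_meas (y : ℝ) : AEStronglyMeasurable (Gfun y) (volume.restrict (Ioi 0)) := by
  unfold Gfun
  apply Measurable.aestronglyMeasurable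
  exact ((Real.measurable_log.comp (measurable_const.add measurable_id)).sub
      (Real.measurable_log.comp (measurable_const.add measurable_id))).div measurable_id
      |>.sub (measurable_const.div (measurable_id.mul (measurable_const.add measurable_id)))

lemma Gder_meas (y : ℝ) : AEStronglyMeasurable (Gder y) (volume.restrict (Ioi 0)) := by
  unfold Gder
  exact (Measurable.aestronglyMeasurable (by fun_prop))

lemma Gfun_eq_alt {y t : ℝ} (hy : 0 < y) (ht : 0 < t) :
    Gfun y t = (Real.log (y + t) - Real.log (y * (1 + t))) / t + Real.log y / (1 + t) := by
  unfold Gfun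
  rw [Real.log_mul (ne_of_gt hy) (by positivity)]
  have ht' : t ≠ 0 := ne_of_gt ht
  have ht1 : (1:ℝ) + t ≠ 0 := by positivity
  field_simp
  ring

lemma Gfun_bound_small {y t : ℝ} (hy : 0 < y) (ht : t ∈ Ioc (0:ℝ) 1) :
    |Gfun y t| ≤ |1 - y| / y + |Real.log y| := by
  obtain ⟨ht0, ht1⟩ := ht
  rw [Gfun_eq_alt hy ht0]
  have hyt : (0:ℝ) < y + t := by positivity
  have hyt' : (0:ℝ) < y * (1 + t) := by positivity
  have hmin : y ≤ min (y + t) (y * (1 + t)) := by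
    apply le_min (by linarith) (by nlinarith)
  have h1 : |Real.log (y + t) - Real.log (y * (1 + t))| ≤ t * |1 - y| / y := by
    calc |Real.log (y + t) - Real.log (y * (1 + t))|
        ≤ |y + t - y * (1 + t)| / min (y + t) (y * (1 + t)) := abs_log_sub_log_le hyt hyt'
      _ ≤ |y + t - y * (1 + t)| / y := by
          apply div_le_div_of_nonneg_left (abs_nonneg _) hy hmin
      _ = t * |1 - y| / y := by
          rw [show y + t - y * (1 + t) = t * (1 - y) by ring, abs_mul, abs_of_pos ht0]
  calc |(Real.log (y + t) - Real.log (y * (1 + t))) / t + Real.log y / (1 + t)|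
      ≤ |(Real.log (y + t) - Real.log (y * (1 + t))) / t| + |Real.log y / (1 + t)| :=
        abs_add_le _ _
    _ ≤ |1 - y| / y + |Real.log y| := by
        apply add_le_add
        · rw [abs_div, abs_of_pos ht0, div_le_iff₀ ht0]
          calc |Real.log (y + t) - Real.log (y * (1 + t))| ≤ t * |1 - y| / y := h1
            _ = |1 - y| / y * t := by ring
        · rw [abs_div]
          rw [abs_of_pos (by positivity : (0:ℝ) < 1 + t)]
          exact div_le_self (abs_nonneg _) (by linarith)

lemma Gfun_bound_large {y t : ℝ} (hy : 0 < y) (ht : t ∈ Ioi (1:ℝ)) :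
    |Gfun y t| ≤ (|1 - y| / y + |Real.log y| + |y - 1|) / t ^ 2 := by
  have ht1 : (1:ℝ) < t := ht
  have ht0 : (0:ℝ) < t := lt_trans one_pos ht1
  have hyt : (0:ℝ) < y + t := by positivity
  have h1t : (0:ℝ) < 1 + t := by positivity
  have hmin : t ≤ min (y + t) (1 + t) := le_min (by linarith) (by linarith)
  have h1 : |Real.log (y + t) - Real.log (1 + t)| ≤ |y - 1| / t := by
    calc |Real.log (y + t) - Real.log (1 + t)|
        ≤ |y + t - (1 + t)| / min (y + t) (1 + t) := abs_log_sub_log_le hyt h1t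
      _ ≤ |y + t - (1 + t)| / t := div_le_div_of_nonneg_left (abs_nonneg _) ht0 hmin
      _ = |y - 1| / t := by norm_num
  have h2 : |Real.log y / (t * (1 + t))| ≤ |Real.log y| / t ^ 2 := by
    rw [abs_div, abs_of_pos (by positivity : (0:ℝ) < t * (1 + t))]
    exact div_le_div_of_nonneg_left (abs_nonneg _) (by positivity) (by nlinarith)
  have habs : |Gfun y t| ≤ |(Real.log (y + t) - Real.log (1 + t)) / t|
      + |Real.log y / (t * (1 + t))| := by
    unfold Gfun
    rw [sub_eq_add_neg]
    exact (abs_add_le _ _).trans (by rw [abs_neg])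
  have h3 : |(Real.log (y + t) - Real.log (1 + t)) / t| ≤ |y - 1| / t ^ 2 := by
    rw [abs_div, abs_of_pos ht0, div_le_div_iff₀ ht0 (by positivity)]
    calc |Real.log (y + t) - Real.log (1 + t)| * t ^ 2
        ≤ (|y - 1| / t) * t ^ 2 := by
          apply mul_le_mul_of_nonneg_right h1 (by positivity)
      _ = |y - 1| * t := by field_simp
  have hnn : (0:ℝ) ≤ |1 - y| / y := by positivity
  calc |Gfun y t| ≤ |y - 1| / t ^ 2 + |Real.log y| / t ^ 2 := le_trans habs (by linarith)
    _ ≤ (|1 - y| / y + |Real.log y| + |y - 1|) / t ^ 2 := by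
        rw [← add_div]
        apply div_le_div_of_nonneg_right ?_ (by positivity)
        linarith

lemma Gfun_integrable {y : ℝ} (hy : 0 < y) : IntegrableOn (Gfun y) (Ioi 0) := by
  apply integrableOn_of_bounds (C := |1 - y| / y + |Real.log y| + |y - 1|) (Gfun_meas y)
  · intro t ht
    have := Gfun_bound_small hy ht
    have h0 : (0:ℝ) ≤ |y - 1| := abs_nonneg _
    linarith
  · intro t ht
    exact Gfun_bound_large hy ht

lemma Gfun_hasDeriv {y t : ℝ} (hy : 0 < y) (ht : 0 < t) :
    HasDerivAt (fun y => Gfun y t) (Gder y t) y := by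
  have hyt : (0:ℝ) < y + t := by positivity
  have h2 : HasDerivAt (fun y : ℝ => Real.log (y + t)) ((y + t)⁻¹) y := by
    have := (Real.hasDerivAt_log (ne_of_gt hyt)).comp y ((hasDerivAt_id y).add_const t)
    simpa [Function.comp_def] using this
  have h3 : HasDerivAt (fun y : ℝ => (Real.log (y + t) - Real.log (1 + t)) / t)
      ((y + t)⁻¹ / t) y := (h2.sub_const _).div_const t
  have h4 : HasDerivAt (fun y : ℝ => Real.log y / (t * (1 + t)))
      (y⁻¹ / (t * (1 + t))) y := (Real.hasDerivAt_log (ne_of_gt hy)).div_const _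
  have h5 := h3.sub h4
  have : (y + t)⁻¹ / t - y⁻¹ / (t * (1 + t)) = Gder y t := by
    unfold Gder
    have ht' : t ≠ 0 := ne_of_gt ht
    have h1t : (1:ℝ) + t ≠ 0 := by positivity
    field_simp
    ring
  rw [this] at h5
  exact h5

lemma Gder_bound {y t m M : ℝ} (hm : 0 < m) (hy : m ≤ y) (hyM : y ≤ M) (ht : 0 < t) :
    |Gder y t| ≤ (M + 1) / m / ((1 + t) * (m + t)) := by
  have hy0 : 0 < y := lt_of_lt_of_le hm hy
  have h1t : (0:ℝ) < 1 + t := by positivity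
  have hyt : (0:ℝ) < y + t := by positivity
  unfold Gder
  rw [abs_div, abs_of_pos (by positivity : (0:ℝ) < y * (1 + t) * (y + t))]
  have hM : 0 < M := lt_of_lt_of_le hm (le_trans hy hyM)
  have hnum : |y - 1| ≤ M + 1 := by
    rw [abs_sub_le_iff]
    constructor <;> · nlinarith
  have hden : m * ((1 + t) * (m + t)) ≤ y * (1 + t) * (y + t) := by
    have : m + t ≤ y + t := by linarith
    calc m * ((1 + t) * (m + t)) = m * (1 + t) * (m + t) := by ring
      _ ≤ y * (1 + t) * (y + t) := by
        apply mul_le_mul (by nlinarith) this (by positivity) (by positivity)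
  calc |y - 1| / (y * (1 + t) * (y + t)) ≤ (M + 1) / (y * (1 + t) * (y + t)) := by
        gcongr
      _ ≤ (M + 1) / (m * ((1 + t) * (m + t))) := by
        apply div_le_div_of_nonneg_left (by positivity) (by positivity) hden
      _ = (M + 1) / m / ((1 + t) * (m + t)) := by
        rw [div_div]

lemma bound_integrable {A m : ℝ} (hA : 0 ≤ A) (hm : 0 < m) :
    IntegrableOn (fun t : ℝ => A / ((1 + t) * (m + t))) (Ioi 0) := by
  apply integrableOn_of_bounds (C := A / m + A)
  · apply Measurable.aestronglyMeasurable
    fun_prop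
  · intro t ht
    obtain ⟨ht0, ht1⟩ := ht
    have h1 : (0:ℝ) < (1 + t) * (m + t) := by positivity
    rw [abs_of_nonneg (by positivity)]
    have : m ≤ (1 + t) * (m + t) := by nlinarith
    calc A / ((1 + t) * (m + t)) ≤ A / m := div_le_div_of_nonneg_left hA hm this
      _ ≤ A / m + A := by linarith
  · intro t ht
    have ht1 : (1:ℝ) < t := ht
    have ht0 : (0:ℝ) < t := lt_trans one_pos ht1
    rw [abs_of_nonneg (by positivity)]
    have h2 : t ^ 2 ≤ (1 + t) * (m + t) := by nlinarith
    calc A / ((1 + t) * (m + t)) ≤ A / t ^ 2 :=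
        div_le_div_of_nonneg_left hA (by positivity) h2
      _ ≤ (A / m + A) / t ^ 2 := by
        apply div_le_div_of_nonneg_right ?_ (by positivity)
        have : 0 ≤ A / m := by positivity
        linarith

lemma Gder_integral {y : ℝ} (hy : 0 < y) (hint : IntegrableOn (Gder y) (Ioi 0)) :
    ∫ t in Ioi 0, Gder y t = Real.log y / y := by
  rcases eq_or_ne y 1 with rfl | hne
  · simp [Gder]
  · set φ : ℝ → ℝ := fun t => (Real.log (1 + t) - Real.log (y + t)) / y with hφ
    have hderiv : ∀ t ∈ Ici (0:ℝ), HasDerivAt φ (Gder y t) t := by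
      intro t ht
      have ht0 : (0:ℝ) ≤ t := ht
      have h1t : (0:ℝ) < 1 + t := by positivity
      have hyt : (0:ℝ) < y + t := by positivity
      have d1 : HasDerivAt (fun t : ℝ => Real.log (1 + t)) ((1 + t)⁻¹) t := by
        have := (Real.hasDerivAt_log (ne_of_gt h1t)).comp t ((hasDerivAt_id t).const_add 1)
        simpa [Function.comp_def] using this
      have d2 : HasDerivAt (fun t : ℝ => Real.log (y + t)) ((y + t)⁻¹) t := by
        have := (Real.hasDerivAt_log (ne_of_gt hyt)).comp t ((hasDerivAt_id t).const_add y)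
        simpa [Function.comp_def] using this
      have d3 := (d1.sub d2).div_const y
      have heq : ((1 + t)⁻¹ - (y + t)⁻¹) / y = Gder y t := by
        unfold Gder
        rw [inv_sub_inv (ne_of_gt h1t) (ne_of_gt hyt), div_div,
          show y + t - (1 + t) = y - 1 by ring,
          show (1 + t) * (y + t) * y = y * (1 + t) * (y + t) by ring]
      rw [heq] at d3
      exact d3
    have h0 : Tendsto (fun t : ℝ => (1 - y) / (y + t)) atTop (𝓝 0) :=
      Tendsto.div_atTop tendsto_const_nhds (tendsto_atTop_add_const_left _ y tendsto_id)
    have h1 : Tendsto (fun t : ℝ => 1 + (1 - y) / (y + t)) atTop (𝓝 1) := by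
      simpa using tendsto_const_nhds.add h0
    have h2 : Tendsto (fun t : ℝ => Real.log (1 + (1 - y) / (y + t))) atTop (𝓝 0) := by
      have := (Real.continuousAt_log one_ne_zero).tendsto.comp h1
      simpa [Function.comp_def] using this
    have heq : ∀ᶠ t in atTop, Real.log (1 + (1 - y) / (y + t)) / y = φ t := by
      filter_upwards [eventually_gt_atTop (0:ℝ)] with t ht0
      have h1t : (0:ℝ) < 1 + t := by positivity
      have hyt : (0:ℝ) < y + t := by positivity
      have : 1 + (1 - y) / (y + t) = (1 + t) / (y + t) := by field_simp; ring
      rw [hφ]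
      rw [this, Real.log_div (ne_of_gt h1t) (ne_of_gt hyt)]
    have htend : Tendsto φ atTop (𝓝 0) := by
      have := (h2.div_const y).congr' heq
      simpa using this
    rw [integral_Ioi_of_hasDerivAt_of_tendsto' hderiv hint htend]
    have hphi0 : φ 0 = (0 - Real.log y) / y := by
      rw [hφ]
      norm_num
    rw [hphi0]
    ring

noncomputable def Hfun (y : ℝ) : ℝ := ∫ t in Ioi 0, Gfun y t

lemma Hfun_hasDeriv {y : ℝ} (hy : 0 < y) : HasDerivAt Hfun (Real.log y / y) y := by
  have hm : (0:ℝ) < y / 2 := by positivity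
  have hA : (0:ℝ) ≤ (3 * y / 2 + 1) / (y / 2) := by positivity
  have h_bound : ∀ᵐ t ∂(volume.restrict (Ioi (0:ℝ))), ∀ x ∈ Metric.ball y (y / 2),
      ‖Gder x t‖ ≤ (3 * y / 2 + 1) / (y / 2) / ((1 + t) * (y / 2 + t)) := by
    refine (ae_restrict_iff' measurableSet_Ioi).2 (Filter.Eventually.of_forall ?_)
    intro t ht x hx
    rw [Metric.mem_ball, Real.dist_eq, abs_lt] at hx
    rw [Real.norm_eq_abs]
    exact Gder_bound hm (by linarith [hx.1]) (by linarith [hx.2]) ht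
  have h_diff : ∀ᵐ t ∂(volume.restrict (Ioi (0:ℝ))), ∀ x ∈ Metric.ball y (y / 2),
      HasDerivAt (fun x => Gfun x t) (Gder x t) x := by
    refine (ae_restrict_iff' measurableSet_Ioi).2 (Filter.Eventually.of_forall ?_)
    intro t ht x hx
    rw [Metric.mem_ball, Real.dist_eq, abs_lt] at hx
    exact Gfun_hasDeriv (by linarith [hx.1]) ht
  have key := hasDerivAt_integral_of_dominated_loc_of_deriv_le
    (F := fun y t => Gfun y t) (F' := fun y t => Gder y t)
    (bound := fun t => (3 * y / 2 + 1) / (y / 2) / ((1 + t) * (y / 2 + t)))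
    (μ := volume.restrict (Ioi 0)) (Metric.ball_mem_nhds y (by positivity : (0:ℝ) < y / 2))
    (Filter.Eventually.of_forall (fun x => Gfun_meas x))
    (Gfun_integrable hy) (Gder_meas y) h_bound (bound_integrable hA hm) h_diff
  have := key.2
  rwa [Gder_integral hy key.1] at this

lemma Hfun_one : Hfun 1 = 0 := by
  have h : ∀ t : ℝ, Gfun 1 t = 0 := by
    intro t
    unfold Gfun
    simp
  unfold Hfun
  simp [h]

lemma Hfun_eq {y : ℝ} (hy : 0 < y) : Hfun y = (Real.log y) ^ 2 / 2 := by
  set ψ : ℝ → ℝ := fun y => Hfun y - (Real.log y) ^ 2 / 2 with hψ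
  have hψd : ∀ x ∈ Ioi (0:ℝ), HasDerivAt ψ 0 x := by
    intro x hx
    have hx0 : (0:ℝ) < x := hx
    have h1 := Hfun_hasDeriv hx0
    have h2 : HasDerivAt (fun y : ℝ => (Real.log y) ^ 2 / 2) (Real.log x / x) x := by
      have h3 := ((Real.hasDerivAt_log (ne_of_gt hx0)).fun_pow 2).div_const 2
      refine h3.congr_deriv ?_
      field_simp
      ring
    simpa using h1.fun_sub h2
  have hψ1 : ψ 1 = 0 := by
    rw [hψ]
    simp [Hfun_one]
  have key : ψ y = 0 := by
    rcases lt_trichotomy y 1 with h | h | h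
    · have hcont : ContinuousOn ψ (Icc y 1) := by
        intro x hx
        exact (hψd x (lt_of_lt_of_le hy hx.1)).continuousAt.continuousWithinAt
      have hder : ∀ x ∈ Ico y 1, HasDerivWithinAt ψ 0 (Ici x) x := fun x hx =>
        (hψd x (lt_of_lt_of_le hy hx.1)).hasDerivWithinAt
      have h4 := constant_of_has_deriv_right_zero hcont hder 1 (by constructor <;> linarith)
      rw [hψ1] at h4
      exact h4.symm
    · rw [h]; exact hψ1
    · have hcont : ContinuousOn ψ (Icc 1 y) := by
        intro x hx
        exact (hψd x (lt_of_lt_of_le one_pos hx.1)).continuousAt.continuousWithinAt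
      have hder : ∀ x ∈ Ico 1 y, HasDerivWithinAt ψ 0 (Ici x) x := fun x hx =>
        (hψd x (lt_of_lt_of_le one_pos hx.1)).hasDerivWithinAt
      have h4 := constant_of_has_deriv_right_zero hcont hder y (by constructor <;> linarith)
      rw [h4, hψ1]
  have : Hfun y - (Real.log y) ^ 2 / 2 = 0 := key
  linarith

lemma key3 {y₁ y₂ y₃ z₁ z₂ z₃ : ℝ} (hy1 : 0 < y₁) (hy2 : 0 < y₂) (hy3 : 0 < y₃)
    (hz1 : 0 < z₁) (hz2 : 0 < z₂) (hz3 : 0 < z₃)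
    (he1 : z₁ + z₂ + z₃ ≤ y₁ + y₂ + y₃)
    (he2 : z₁ * z₂ + z₁ * z₃ + z₂ * z₃ ≤ y₁ * y₂ + y₁ * y₃ + y₂ * y₃)
    (he3 : y₁ * y₂ * y₃ = z₁ * z₂ * z₃) :
    (Real.log z₁) ^ 2 + (Real.log z₂) ^ 2 + (Real.log z₃) ^ 2 ≤
      (Real.log y₁) ^ 2 + (Real.log y₂) ^ 2 + (Real.log y₃) ^ 2 := by
  have hlogsum : Real.log y₁ + Real.log y₂ + Real.log y₃
      = Real.log z₁ + Real.log z₂ + Real.log z₃ := by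
    have h := congrArg Real.log he3
    rwa [Real.log_mul (by positivity) (ne_of_gt hy3), Real.log_mul (ne_of_gt hy1) (ne_of_gt hy2),
      Real.log_mul (by positivity) (ne_of_gt hz3),
      Real.log_mul (ne_of_gt hz1) (ne_of_gt hz2)] at h
  set D : ℝ → ℝ := fun t => Gfun y₁ t + Gfun y₂ t + Gfun y₃ t
      - (Gfun z₁ t + Gfun z₂ t + Gfun z₃ t) with hD
  have hpt : ∀ t ∈ Ioi (0:ℝ), 0 ≤ D t := by
    intro t ht
    have ht0 : (0:ℝ) < t := ht
    have hid : D t = (Real.log (y₁ + t) + Real.log (y₂ + t) + Real.log (y₃ + t)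
        - (Real.log (z₁ + t) + Real.log (z₂ + t) + Real.log (z₃ + t))) / t
        - ((Real.log y₁ + Real.log y₂ + Real.log y₃)
          - (Real.log z₁ + Real.log z₂ + Real.log z₃)) / (t * (1 + t)) := by
      rw [hD]
      unfold Gfun
      ring
    rw [hid, hlogsum, sub_self, zero_div, sub_zero]
    apply div_nonneg ?_ ht0.le
    rw [sub_nonneg]
    have hprod : (z₁ + t) * (z₂ + t) * (z₃ + t) ≤ (y₁ + t) * (y₂ + t) * (y₃ + t) := by
      nlinarith [mul_le_mul_of_nonneg_right he1 (sq_nonneg t),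
        mul_le_mul_of_nonneg_right he2 ht0.le]
    have hlog := Real.log_le_log (by positivity) hprod
    rwa [Real.log_mul (by positivity) (by positivity), Real.log_mul (by positivity) (by positivity),
      Real.log_mul (by positivity) (by positivity),
      Real.log_mul (by positivity) (by positivity)] at hlog
  have iy1 := Gfun_integrable hy1
  have iy2 := Gfun_integrable hy2
  have iy3 := Gfun_integrable hy3
  have iz1 := Gfun_integrable hz1
  have iz2 := Gfun_integrable hz2
  have iz3 := Gfun_integrable hz3
  have hval : ∫ t in Ioi 0, D t
      = ((Real.log y₁) ^ 2 + (Real.log y₂) ^ 2 + (Real.log y₃) ^ 2) / 2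
        - ((Real.log z₁) ^ 2 + (Real.log z₂) ^ 2 + (Real.log z₃) ^ 2) / 2 := by
    have hy12 : IntegrableOn (fun t => Gfun y₁ t + Gfun y₂ t) (Ioi 0) := iy1.add iy2
    have hz12 : IntegrableOn (fun t => Gfun z₁ t + Gfun z₂ t) (Ioi 0) := iz1.add iz2
    have hys : IntegrableOn (fun t => Gfun y₁ t + Gfun y₂ t + Gfun y₃ t) (Ioi 0) :=
      hy12.add iy3
    have hzs : IntegrableOn (fun t => Gfun z₁ t + Gfun z₂ t + Gfun z₃ t) (Ioi 0) :=
      hz12.add iz3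
    rw [hD]
    rw [integral_sub hys hzs, integral_add hy12 iy3, integral_add iy1 iy2,
      integral_add hz12 iz3, integral_add iz1 iz2]
    have e1 : ∫ t in Ioi 0, Gfun y₁ t = (Real.log y₁) ^ 2 / 2 := Hfun_eq hy1
    have e2 : ∫ t in Ioi 0, Gfun y₂ t = (Real.log y₂) ^ 2 / 2 := Hfun_eq hy2
    have e3 : ∫ t in Ioi 0, Gfun y₃ t = (Real.log y₃) ^ 2 / 2 := Hfun_eq hy3
    have f1 : ∫ t in Ioi 0, Gfun z₁ t = (Real.log z₁) ^ 2 / 2 := Hfun_eq hz1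
    have f2 : ∫ t in Ioi 0, Gfun z₂ t = (Real.log z₂) ^ 2 / 2 := Hfun_eq hz2
    have f3 : ∫ t in Ioi 0, Gfun z₃ t = (Real.log z₃) ^ 2 / 2 := Hfun_eq hz3
    rw [e1, e2, e3, f1, f2, f3]
    ring
  have hnn : 0 ≤ ∫ t in Ioi 0, D t := setIntegral_nonneg measurableSet_Ioi hpt
  rw [hval] at hnn
  linarith

/-- The sum of squared logarithms inequality in dimension three. -/
theorem sum_sq_log_ineq_three (x₁ x₂ x₃ d₁ d₂ d₃ : ℝ)
    (hx1 : x₁ > 0) (hx2 : x₂ > 0) (hx3 : x₃ > 0)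
    (hd1 : d₁ > 0) (hd2 : d₂ > 0) (hd3 : d₃ > 0)
    (h1 : x₁ ^ 2 + x₂ ^ 2 + x₃ ^ 2 ≥ d₁ ^ 2 + d₂ ^ 2 + d₃ ^ 2)
    (h2 : 1 / x₁ ^ 2 + 1 / x₂ ^ 2 + 1 / x₃ ^ 2 ≥ 1 / d₁ ^ 2 + 1 / d₂ ^ 2 + 1 / d₃ ^ 2)
    (h3 : x₁ * x₂ * x₃ = d₁ * d₂ * d₃) :
    (Real.log x₁) ^ 2 + (Real.log x₂) ^ 2 + (Real.log x₃) ^ 2 ≥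
      (Real.log d₁) ^ 2 + (Real.log d₂) ^ 2 + (Real.log d₃) ^ 2 := by
  have he1 : d₁ ^ 2 + d₂ ^ 2 + d₃ ^ 2 ≤ x₁ ^ 2 + x₂ ^ 2 + x₃ ^ 2 := h1
  have ex : (x₁ * x₂ * x₃) ^ 2 * (1 / x₁ ^ 2 + 1 / x₂ ^ 2 + 1 / x₃ ^ 2)
      = x₁ ^ 2 * x₂ ^ 2 + x₁ ^ 2 * x₃ ^ 2 + x₂ ^ 2 * x₃ ^ 2 := by
    field_simp
    ring
  have ed : (d₁ * d₂ * d₃) ^ 2 * (1 / d₁ ^ 2 + 1 / d₂ ^ 2 + 1 / d₃ ^ 2)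
      = d₁ ^ 2 * d₂ ^ 2 + d₁ ^ 2 * d₃ ^ 2 + d₂ ^ 2 * d₃ ^ 2 := by
    field_simp
    ring
  have he2 : d₁ ^ 2 * d₂ ^ 2 + d₁ ^ 2 * d₃ ^ 2 + d₂ ^ 2 * d₃ ^ 2
      ≤ x₁ ^ 2 * x₂ ^ 2 + x₁ ^ 2 * x₃ ^ 2 + x₂ ^ 2 * x₃ ^ 2 := by
    rw [← ex, ← ed, ← h3]
    exact mul_le_mul_of_nonneg_left h2 (by positivity)
  have he3 : x₁ ^ 2 * x₂ ^ 2 * x₃ ^ 2 = d₁ ^ 2 * d₂ ^ 2 * d₃ ^ 2 := by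
    rw [show x₁ ^ 2 * x₂ ^ 2 * x₃ ^ 2 = (x₁ * x₂ * x₃) ^ 2 by ring, h3]
    ring
  have key := key3 (by positivity : (0:ℝ) < x₁ ^ 2) (by positivity : (0:ℝ) < x₂ ^ 2)
    (by positivity : (0:ℝ) < x₃ ^ 2) (by positivity : (0:ℝ) < d₁ ^ 2)
    (by positivity : (0:ℝ) < d₂ ^ 2) (by positivity : (0:ℝ) < d₃ ^ 2) he1 he2 he3
  simp only [Real.log_pow] at key
  push_cast at key
  nlinarith [key]
end

section
/- Equality holds in the three-dimensional sum of squared logarithms inequality, i.e., (log x₁)² + (log x₂)² + (log x₃)² = (log d₁)² + (log d₂)² + (log d₃)² under the hypotheses x₁²+x₂²+x₃² ≥ d₁²+d₂²+d₃², Σ 1/xᵢ² ≥ Σ 1/dᵢ², x₁x₂x₃ = d₁d₂d₃, if and only if the multisets {x₁,x₂,x₃} and {d₁,d₂,d₃} sorted in decreasing order are equal. -/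
open Real MeasureTheory Set Filter Topology


noncomputable def slker (a t : ℝ) : ℝ :=
  2/t * (Real.log (a+t) - Real.log (1+t)) - 2 * Real.log a / (t*(1+t))

lemma slker_bounds (a t : ℝ) (ha : 0 < a) (ht : 0 < t) :
    0 ≤ slker a t ∧ slker a t ≤ (4*(a + a⁻¹ - 2)) / (1+t)^2 := by
  have h1t : (0:ℝ) < 1 + t := by linarith
  have hat : (0:ℝ) < a + t := by linarith
  have hz : (1 - t/(1+t)) * 1 + t/(1+t) * a⁻¹ = (a+t)/(a*(1+t)) := by
    field_simp
    try ring
    try tauto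
  have hzpos : (0:ℝ) < (a+t)/(a*(1+t)) := by positivity
  have hlogz : Real.log ((a+t)/(a*(1+t))) = Real.log (a+t) - Real.log a - Real.log (1+t) := by
    rw [Real.log_div hat.ne' (by positivity), Real.log_mul ha.ne' h1t.ne']; ring
  have hker : slker a t = 2/t * (Real.log ((a+t)/(a*(1+t))) + t/(1+t) * Real.log a) := by
    rw [slker, hlogz]
    field_simp
    try ring
    try tauto
  have hu0 : (0:ℝ) ≤ t/(1+t) := by positivity
  have hu1 : t/(1+t) < 1 := by rw [div_lt_one h1t]; linarith
  have hlow : -(t/(1+t) * Real.log a) ≤ Real.log ((a+t)/(a*(1+t))) := by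
    have hconc := (strictConcaveOn_log_Ioi.concaveOn).2 (mem_Ioi.2 one_pos)
      (mem_Ioi.2 (show (0:ℝ) < a⁻¹ by positivity)) (by linarith : (0:ℝ) ≤ 1 - t/(1+t)) hu0
      (by ring : (1 - t/(1+t)) + t/(1+t) = 1)
    rw [smul_eq_mul, smul_eq_mul, smul_eq_mul, smul_eq_mul, hz, Real.log_one, Real.log_inv]
      at hconc
    linarith
  have hb1 : Real.log ((a+t)/(a*(1+t))) ≤ t/(1+t) * (a⁻¹ - 1) := by
    have h := Real.log_le_sub_one_of_pos hzpos
    have he : (a+t)/(a*(1+t)) - 1 = t/(1+t) * (a⁻¹ - 1) := by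
      field_simp
      try ring
      try tauto
    linarith
  have hb2 : Real.log ((a+t)/(a*(1+t))) ≤ (1 - t/(1+t))*(a-1) - Real.log a := by
    have h := Real.log_le_sub_one_of_pos (show (0:ℝ) < (a+t)/(1+t) by positivity)
    have heq : Real.log ((a+t)/(1+t)) = Real.log ((a+t)/(a*(1+t))) + Real.log a := by
      rw [hlogz, Real.log_div hat.ne' h1t.ne']; ring
    have he : (a+t)/(1+t) - 1 = (1 - t/(1+t))*(a-1) := by
      field_simp
      try ring
      try tauto
    linarith
  have hC1 : 0 ≤ a⁻¹ - 1 + Real.log a := by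
    have h := Real.log_le_sub_one_of_pos (show (0:ℝ) < a⁻¹ by positivity)
    rw [Real.log_inv] at h; linarith
  have hC2 : 0 ≤ a - 1 - Real.log a := by linarith [Real.log_le_sub_one_of_pos ha]
  have hKeq : 4*(a + a⁻¹ - 2) = 4*(a⁻¹ - 1 + Real.log a) + 4*(a - 1 - Real.log a) := by ring
  constructor
  · rw [hker]
    apply mul_nonneg (by positivity)
    linarith
  · rcases le_total t 1 with h | h
    · have e1 : slker a t ≤ 2/(1+t) * (a⁻¹ - 1 + Real.log a) := by
        rw [hker]
        have heq2 : 2/t * (t/(1+t) * (a⁻¹ - 1) + t/(1+t) * Real.log a)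
            = 2/(1+t) * (a⁻¹ - 1 + Real.log a) := by
          field_simp
          try ring
          try tauto
        calc 2/t * (Real.log ((a+t)/(a*(1+t))) + t/(1+t) * Real.log a)
            ≤ 2/t * (t/(1+t) * (a⁻¹ - 1) + t/(1+t) * Real.log a) := by
              apply mul_le_mul_of_nonneg_left (by linarith) (by positivity)
          _ = _ := heq2
      have e2 : 2/(1+t) * (a⁻¹ - 1 + Real.log a) ≤ (4*(a + a⁻¹ - 2)) / (1+t)^2 := by
        rw [div_mul_eq_mul_div, div_le_div_iff₀ h1t (by positivity)]
        rw [hKeq]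
        nlinarith [mul_nonneg hC1 h1t.le, mul_nonneg hC2 h1t.le,
          mul_nonneg (mul_nonneg hC1 h1t.le) ht.le]
      linarith
    · have e1 : slker a t ≤ 2/(t*(1+t)) * (a - 1 - Real.log a) := by
        rw [hker]
        have heq2 : 2/t * ((1 - t/(1+t))*(a-1) - Real.log a + t/(1+t) * Real.log a)
            = 2/(t*(1+t)) * (a - 1 - Real.log a) := by
          field_simp
          try ring
          try tauto
        calc 2/t * (Real.log ((a+t)/(a*(1+t))) + t/(1+t) * Real.log a)
            ≤ 2/t * ((1 - t/(1+t))*(a-1) - Real.log a + t/(1+t) * Real.log a) := by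
              apply mul_le_mul_of_nonneg_left (by linarith) (by positivity)
          _ = _ := heq2
      have e2 : 2/(t*(1+t)) * (a - 1 - Real.log a) ≤ (4*(a + a⁻¹ - 2)) / (1+t)^2 := by
        rw [div_mul_eq_mul_div, div_le_div_iff₀ (by positivity) (by positivity)]
        rw [hKeq]
        nlinarith [mul_nonneg hC2 ht.le, mul_nonneg hC1 (mul_pos ht h1t).le,
          mul_nonneg (mul_nonneg hC2 ht.le) ht.le]
      linarith


lemma neg_inv_deriv (c : ℝ) (hc : 0 < c) : ∀ x ∈ Ici (0:ℝ),
    HasDerivAt (fun t : ℝ => -(c+t)⁻¹) (((c+x)^2)⁻¹) x := by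
  intro x hx
  have hcx : c + x ≠ 0 := by
    have : (0:ℝ) < c + x := by have := hx.out; linarith
    exact this.ne'
  have h1 : HasDerivAt (fun t : ℝ => c + t) 1 x := (hasDerivAt_id x).const_add c
  have h2 := (h1.inv hcx).neg
  have e : ((c+x)^2)⁻¹ = -(-1 / (c+x)^2) := by ring
  rw [e]
  exact h2

lemma neg_inv_tendsto (c : ℝ) : Tendsto (fun t : ℝ => -(c+t)⁻¹) atTop (𝓝 0) := by
  have h : Tendsto (fun t : ℝ => c + t) atTop atTop := tendsto_atTop_add_const_left _ c tendsto_id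
  simpa using (h.inv_tendsto_atTop).neg

/-- base integrability: `(c+t)⁻²` integrable on `Ioi 0` -/
lemma int_sq (c : ℝ) (hc : 0 < c) : IntegrableOn (fun t : ℝ => ((c+t)^2)⁻¹) (Ioi 0) := by
  refine integrableOn_Ioi_deriv_of_nonneg' (neg_inv_deriv c hc) (fun x hx => by positivity)
    (neg_inv_tendsto c)


lemma slker_contOn (a : ℝ) (ha : 0 < a) : ContinuousOn (slker a) (Ioi 0) := by
  intro t ht
  have ht0 : (0:ℝ) < t := ht
  have h1t : (0:ℝ) < 1+t := by linarith
  have hat : (0:ℝ) < a+t := by linarith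
  apply ContinuousAt.continuousWithinAt
  have l1 : ContinuousAt (fun t : ℝ => Real.log (a+t)) t :=
    (Real.continuousAt_log hat.ne').comp (by fun_prop)
  have l2 : ContinuousAt (fun t : ℝ => Real.log (1+t)) t :=
    (Real.continuousAt_log h1t.ne').comp (by fun_prop)
  have l3 : ContinuousAt (fun t : ℝ => 2/t) t := continuousAt_const.div continuousAt_id ht0.ne'
  have l4 : ContinuousAt (fun t : ℝ => 2 * Real.log a / (t*(1+t))) t := by
    apply continuousAt_const.div (by fun_prop)
    positivity
  exact ((l3.mul (l1.sub l2)).sub l4 : ContinuousAt (fun t => 2/t *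
    (Real.log (a+t) - Real.log (1+t)) - 2 * Real.log a / (t*(1+t))) t)

lemma slker_integrable (a : ℝ) (ha : 0 < a) : IntegrableOn (slker a) (Ioi 0) := by
  have hb : Integrable (fun t => (4*(a + a⁻¹ - 2)) * (((1:ℝ)+t)^2)⁻¹)
      (volume.restrict (Ioi 0)) := (int_sq 1 one_pos).const_mul _
  have hK : 0 ≤ 4*(a + a⁻¹ - 2) := by
    have h : 2 ≤ a + a⁻¹ := by
      have h2 : 0 < a⁻¹ := by positivity
      nlinarith [sq_nonneg (a - 1), mul_inv_cancel₀ ha.ne', mul_pos ha h2]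
    linarith
  refine hb.mono ((slker_contOn a ha).aestronglyMeasurable measurableSet_Ioi) ?_
  rw [ae_restrict_iff' measurableSet_Ioi]
  filter_upwards with t ht
  have ht0 : (0:ℝ) < t := ht
  obtain ⟨hlo, hhi⟩ := slker_bounds a t ha ht0
  rw [Real.norm_eq_abs, Real.norm_eq_abs, abs_of_nonneg hlo, abs_of_nonneg (by positivity)]
  rw [div_eq_mul_inv] at hhi
  exact hhi

lemma slker_hasDeriv (t : ℝ) (ht : 0 < t) (a : ℝ) (ha : 0 < a) :
    HasDerivAt (fun b => slker b t) (2*(a-1)/(a*(a+t)*(1+t))) a := by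
  have h1t : (0:ℝ) < 1+t := by linarith
  have hat : (0:ℝ) < a+t := by linarith
  have h1 : HasDerivAt (fun b : ℝ => Real.log (b+t)) (a+t)⁻¹ a := by
    have := (Real.hasDerivAt_log hat.ne').comp a ((hasDerivAt_id a).add_const t)
    simpa [Function.comp_def] using this
  have h2 : HasDerivAt (fun b : ℝ => Real.log b) a⁻¹ a := Real.hasDerivAt_log ha.ne'
  have H := (((h1.sub_const (Real.log (1+t))).const_mul (2/t)).sub
    ((h2.const_mul 2).div_const (t*(1+t))))
  have hD : 2*(a-1)/(a*(a+t)*(1+t)) = 2/t * (a+t)⁻¹ - 2 * a⁻¹/(t*(1+t)) := by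
    field_simp
    ring
  rw [hD]
  simp only [slker]
  exact H


lemma kerD_contOn (a : ℝ) (ha : 0 < a) :
    ContinuousOn (fun t : ℝ => 2*(a-1)/(a*(a+t)*(1+t))) (Ioi 0) := by
  intro t ht
  have ht0 : (0:ℝ) < t := ht
  apply ContinuousAt.continuousWithinAt
  apply continuousAt_const.div (by fun_prop)
  have : (0:ℝ) < a*(a+t)*(1+t) := by positivity
  exact this.ne'

lemma kerD_integrable (a : ℝ) (ha : 0 < a) :
    IntegrableOn (fun t : ℝ => 2*(a-1)/(a*(a+t)*(1+t))) (Ioi 0) := by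
  have hm : (0:ℝ) < min a 1 := lt_min ha one_pos
  have hb : Integrable (fun t => (2*(a+1)/a) * ((min a 1 + t)^2)⁻¹)
      (volume.restrict (Ioi 0)) := (int_sq _ hm).const_mul _
  refine hb.mono ((kerD_contOn a ha).aestronglyMeasurable measurableSet_Ioi) ?_
  rw [ae_restrict_iff' measurableSet_Ioi]
  filter_upwards with t ht
  have ht0 : (0:ℝ) < t := ht
  have hmt : (0:ℝ) < min a 1 + t := by linarith
  have hden : (0:ℝ) < a*(a+t)*(1+t) := by positivity
  have hkey : (min a 1 + t)^2 * a ≤ a*(a+t)*(1+t) := by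
    have h1 : min a 1 + t ≤ a + t := by
      have := min_le_left a 1; linarith
    have h2 : min a 1 + t ≤ 1 + t := by
      have := min_le_right a 1; linarith
    calc (min a 1 + t)^2 * a = a * ((min a 1 + t) * (min a 1 + t)) := by ring
      _ ≤ a * ((a+t) * (1+t)) := by
          apply mul_le_mul_of_nonneg_left _ ha.le
          exact mul_le_mul h1 h2 hmt.le (by linarith)
      _ = a*(a+t)*(1+t) := by ring
  rw [Real.norm_eq_abs, Real.norm_eq_abs, abs_div, abs_of_nonneg hden.le,
    abs_of_nonneg (by positivity : (0:ℝ) ≤ (2*(a+1)/a) * ((min a 1 + t)^2)⁻¹)]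
  have habs : |2*(a-1)| ≤ 2*(a+1) := by
    rw [abs_mul]
    have : |a-1| ≤ a+1 := by
      rw [abs_le]; constructor <;> linarith
    calc |(2:ℝ)| * |a-1| = 2 * |a-1| := by norm_num
      _ ≤ 2*(a+1) := by linarith
  calc |2*(a-1)| / (a*(a+t)*(1+t)) ≤ (2*(a+1)) / ((min a 1 + t)^2 * a) := by
        apply div_le_div₀ (by positivity) habs (by positivity) hkey
    _ = (2*(a+1)/a) * ((min a 1 + t)^2)⁻¹ := by field_simp
  
lemma kerD_integral (a : ℝ) (ha : 0 < a) :
    ∫ t in Ioi (0:ℝ), 2*(a-1)/(a*(a+t)*(1+t)) = 2*Real.log a/a := by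
  have hg : ∀ x ∈ Ici (0:ℝ), HasDerivAt
      (fun t : ℝ => (2/a) * (Real.log (1+t) - Real.log (a+t)))
      (2*(a-1)/(a*(a+x)*(1+x))) x := by
    intro x hx
    have hx0 : (0:ℝ) ≤ x := hx
    have h1x : (0:ℝ) < 1+x := by linarith
    have hax : (0:ℝ) < a+x := by linarith
    have l1 : HasDerivAt (fun t : ℝ => Real.log (1+t)) (1+x)⁻¹ x := by
      have := (Real.hasDerivAt_log h1x.ne').comp x ((hasDerivAt_id x).const_add 1)
      simpa [Function.comp_def] using this
    have l2 : HasDerivAt (fun t : ℝ => Real.log (a+t)) (a+x)⁻¹ x := by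
      have := (Real.hasDerivAt_log hax.ne').comp x ((hasDerivAt_id x).const_add a)
      simpa [Function.comp_def] using this
    have H := (l1.sub l2).const_mul (2/a)
    have hD : 2*(a-1)/(a*(a+x)*(1+x)) = 2/a * ((1+x)⁻¹ - (a+x)⁻¹) := by
      field_simp
      try ring
      try tauto
    rw [hD]
    exact H
  have htend : Tendsto (fun t : ℝ => (2/a) * (Real.log (1+t) - Real.log (a+t)))
      atTop (𝓝 0) := by
    have h0 : Tendsto (fun t : ℝ => t⁻¹) atTop (𝓝 0) := tendsto_inv_atTop_zero
    have hnum : Tendsto (fun t : ℝ => t⁻¹ + 1) atTop (𝓝 1) := by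
      simpa using h0.add_const 1
    have hden : Tendsto (fun t : ℝ => a * t⁻¹ + 1) atTop (𝓝 1) := by
      simpa using (h0.const_mul a).add_const 1
    have hdiv : Tendsto (fun t : ℝ => (t⁻¹ + 1)/(a * t⁻¹ + 1)) atTop (𝓝 1) := by
      simpa [Pi.div_def] using hnum.div hden one_ne_zero
    have hlog : Tendsto (fun t : ℝ => Real.log ((t⁻¹ + 1)/(a * t⁻¹ + 1))) atTop (𝓝 0) := by
      have := (Real.continuousAt_log one_ne_zero).tendsto.comp hdiv
      simpa [Function.comp_def] using this
    have heq : ∀ᶠ t in atTop, Real.log ((t⁻¹ + 1)/(a * t⁻¹ + 1))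
        = Real.log (1+t) - Real.log (a+t) := by
      filter_upwards [eventually_gt_atTop (0:ℝ)] with t ht
      have h1t : (0:ℝ) < 1+t := by linarith
      have hat : (0:ℝ) < a+t := by linarith
      rw [← Real.log_div h1t.ne' hat.ne']
      congr 1
      field_simp
      try ring
      try tauto
    have := hlog.congr' heq
    simpa using this.const_mul (2/a)
  have := integral_Ioi_of_hasDerivAt_of_tendsto'
    (f := fun t : ℝ => (2/a) * (Real.log (1+t) - Real.log (a+t)))
    (f' := fun t : ℝ => 2*(a-1)/(a*(a+t)*(1+t)))
    (fun x hx => hg x hx) (kerD_integrable a ha) htend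
  rw [this]
  simp [Real.log_one]
  field_simp


lemma phi_hasDeriv (b : ℝ) (hb : 0 < b) :
    HasDerivAt (fun c => ∫ t in Ioi (0:ℝ), slker c t) (2*Real.log b/b) b := by
  set m := min (b/2) 1 with hm
  have hm0 : (0:ℝ) < m := lt_min (by linarith) one_pos
  have hball : ∀ x ∈ Metric.ball b (b/2), b/2 < x ∧ x < 3*b/2 := by
    intro x hx
    rw [Metric.mem_ball, Real.dist_eq, abs_lt] at hx
    constructor <;> linarith [hx.1, hx.2]
  have main := hasDerivAt_integral_of_dominated_loc_of_deriv_le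
    (F := fun c t => slker c t)
    (F' := fun c t => 2*(c-1)/(c*(c+t)*(1+t)))
    (x₀ := b) (s := Metric.ball b (b/2))
    (bound := fun t => (4*(3*b+2)/b) * ((m + t)^2)⁻¹)
    (μ := volume.restrict (Ioi 0))
    (Metric.ball_mem_nhds b (by linarith : (0:ℝ) < b/2))
    ?_ (slker_integrable b hb)
    ((kerD_contOn b hb).aestronglyMeasurable measurableSet_Ioi)
    ?_ ((int_sq m hm0).const_mul _) ?_
  · rw [kerD_integral b hb] at main
    exact main.2
  · -- eventual measurability
    have hev : ∀ᶠ x in 𝓝 b, 0 < x := eventually_gt_nhds hb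
    filter_upwards [hev] with x hx
    exact (slker_contOn x hx).aestronglyMeasurable measurableSet_Ioi
  · -- bound
    rw [ae_restrict_iff' measurableSet_Ioi]
    filter_upwards with t ht
    intro x hx
    have ht0 : (0:ℝ) < t := ht
    obtain ⟨hx1, hx2⟩ := hball x hx
    have hx0 : (0:ℝ) < x := by linarith
    have hmt : (0:ℝ) < m + t := by linarith
    have hden : (0:ℝ) < x*(x+t)*(1+t) := by positivity
    have hkey : (m + t)^2 * (b/2) ≤ x*(x+t)*(1+t) := by
      have h1 : m + t ≤ x + t := by
        have : m ≤ b/2 := min_le_left _ _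
        linarith
      have h2 : m + t ≤ 1 + t := by
        have : m ≤ 1 := min_le_right _ _
        linarith
      calc (m + t)^2 * (b/2) = (b/2) * ((m + t) * (m + t)) := by ring
        _ ≤ x * ((x+t) * (1+t)) := by
            apply mul_le_mul hx1.le (mul_le_mul h1 h2 hmt.le (by linarith)) (by positivity)
              hx0.le
        _ = x*(x+t)*(1+t) := by ring
    have habs : |2*(x-1)| ≤ 2*(3*b+2) := by
      rw [abs_mul]
      have : |x-1| ≤ 3*b+2 := by
        rw [abs_le]; constructor <;> linarith
      calc |(2:ℝ)| * |x-1| = 2 * |x-1| := by norm_num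
        _ ≤ 2*(3*b+2) := by linarith
    rw [Real.norm_eq_abs, abs_div, abs_of_nonneg hden.le]
    calc |2*(x-1)| / (x*(x+t)*(1+t)) ≤ (2*(3*b+2)) / ((m + t)^2 * (b/2)) := by
          apply div_le_div₀ (by positivity) habs (by positivity) hkey
      _ = (4*(3*b+2)/b) * ((m + t)^2)⁻¹ := by
          field_simp
          ring
  · -- differentiability
    rw [ae_restrict_iff' measurableSet_Ioi]
    filter_upwards with t ht
    intro x hx
    have ht0 : (0:ℝ) < t := ht
    obtain ⟨hx1, _⟩ := hball x hx
    exact slker_hasDeriv t ht0 x (by linarith)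

lemma phi_eq (a : ℝ) (ha : 0 < a) :
    ∫ t in Ioi (0:ℝ), slker a t = (Real.log a)^2 := by
  have hsub : uIcc (1:ℝ) a ⊆ Ioi 0 := by
    intro s hs
    have h1 : 0 < min 1 a := lt_min one_pos ha
    exact lt_of_lt_of_le h1 hs.1
  have hcont : ContinuousOn (fun s : ℝ => 2*Real.log s/s) (uIcc 1 a) := by
    intro s hs
    have hs0 : (0:ℝ) < s := hsub hs
    apply ContinuousAt.continuousWithinAt
    exact (continuousAt_const.mul (Real.continuousAt_log hs0.ne')).div continuousAt_id hs0.ne'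
  have hii : IntervalIntegrable (fun s : ℝ => 2*Real.log s/s) volume 1 a :=
    hcont.intervalIntegrable
  have hderiv2 : ∀ s ∈ uIcc (1:ℝ) a, HasDerivAt (fun s : ℝ => (Real.log s)^2)
      (2*Real.log s/s) s := by
    intro s hs
    have hs0 : (0:ℝ) < s := hsub hs
    have := (Real.hasDerivAt_log hs0.ne').pow 2
    refine this.congr_deriv ?_
    norm_num
    field_simp
  have e1 := intervalIntegral.integral_eq_sub_of_hasDerivAt hderiv2 hii
  have e2 := intervalIntegral.integral_eq_sub_of_hasDerivAt
    (f := fun c => ∫ t in Ioi (0:ℝ), slker c t)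
    (fun s hs => phi_hasDeriv s (hsub hs)) hii
  have hone : (∫ t in Ioi (0:ℝ), slker 1 t) = 0 := by
    have hz : ∀ t : ℝ, slker 1 t = 0 := by
      intro t
      simp [slker]
    simp only [hz]
    simp
  rw [hone] at e2
  rw [Real.log_one] at e1
  rw [sub_zero] at e2
  rw [← e2, e1]
  norm_num


lemma triple_eq (y₁ y₂ y₃ f₁ f₂ f₃ : ℝ)
    (hy12 : y₂ ≤ y₁) (hy23 : y₃ ≤ y₂) (hf12 : f₂ ≤ f₁) (hf23 : f₃ ≤ f₂)
    (he1 : y₁+y₂+y₃ = f₁+f₂+f₃) (he2 : y₁*y₂+y₁*y₃+y₂*y₃ = f₁*f₂+f₁*f₃+f₂*f₃)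
    (he3 : y₁*y₂*y₃ = f₁*f₂*f₃) : y₁ = f₁ ∧ y₂ = f₂ ∧ y₃ = f₃ := by
  have k1 : (y₁-f₁)*(y₁-f₂)*(y₁-f₃) = 0 := by
    linear_combination (y₁^2)*he1 - y₁*he2 + he3
  have k1' : (f₁-y₁)*(f₁-y₂)*(f₁-y₃) = 0 := by
    linear_combination (-(f₁^2))*he1 + f₁*he2 - he3
  have hy1 : y₁ = f₁ := by
    rcases lt_trichotomy y₁ f₁ with h | h | h
    · exfalso
      have p1 : 0 < f₁ - y₁ := by linarith
      have p2 : 0 < f₁ - y₂ := by linarith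
      have p3 : 0 < f₁ - y₃ := by linarith
      nlinarith [mul_pos (mul_pos p1 p2) p3]
    · exact h
    · exfalso
      have p1 : 0 < y₁ - f₁ := by linarith
      have p2 : 0 < y₁ - f₂ := by linarith
      have p3 : 0 < y₁ - f₃ := by linarith
      nlinarith [mul_pos (mul_pos p1 p2) p3]
  subst hy1
  have hs : y₂ + y₃ = f₂ + f₃ := by linarith
  have hp : y₂ * y₃ = f₂ * f₃ := by linear_combination he2 - y₁ * hs
  have k2 : (y₂-f₂)*(y₂-f₃) = 0 := by linear_combination y₂*hs - hp
  have k2' : (f₂-y₂)*(f₂-y₃) = 0 := by linear_combination (-f₂)*hs + hp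
  have hy2 : y₂ = f₂ := by
    rcases lt_trichotomy y₂ f₂ with h | h | h
    · exfalso
      have p1 : 0 < f₂ - y₂ := by linarith
      have p2 : 0 < f₂ - y₃ := by linarith
      nlinarith [mul_pos p1 p2]
    · exact h
    · exfalso
      have p1 : 0 < y₂ - f₂ := by linarith
      have p2 : 0 < y₂ - f₃ := by linarith
      nlinarith [mul_pos p1 p2]
  subst hy2
  exact ⟨rfl, rfl, by linarith⟩


set_option maxHeartbeats 1000000 in
/-- Equality case in the three-dimensional sum of squared logarithms inequality:
for decreasingly ordered positive reals satisfying the three conditions, equality of the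
sums of squared logarithms holds iff the ordered triples coincide. -/
theorem sum_sq_log_eq_iff (x₁ x₂ x₃ d₁ d₂ d₃ : ℝ)
    (hx12 : x₁ ≥ x₂) (hx23 : x₂ ≥ x₃) (hx3 : x₃ > 0)
    (hd12 : d₁ ≥ d₂) (hd23 : d₂ ≥ d₃) (hd3 : d₃ > 0)
    (h1 : x₁ ^ 2 + x₂ ^ 2 + x₃ ^ 2 ≥ d₁ ^ 2 + d₂ ^ 2 + d₃ ^ 2)
    (h2 : 1 / x₁ ^ 2 + 1 / x₂ ^ 2 + 1 / x₃ ^ 2 ≥ 1 / d₁ ^ 2 + 1 / d₂ ^ 2 + 1 / d₃ ^ 2)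
    (h3 : x₁ * x₂ * x₃ = d₁ * d₂ * d₃) :
    (Real.log x₁) ^ 2 + (Real.log x₂) ^ 2 + (Real.log x₃) ^ 2 =
      (Real.log d₁) ^ 2 + (Real.log d₂) ^ 2 + (Real.log d₃) ^ 2 ↔
    (x₁ = d₁ ∧ x₂ = d₂ ∧ x₃ = d₃) := by
  constructor
  · intro hEq
    have hx2 : (0:ℝ) < x₂ := lt_of_lt_of_le hx3 hx23
    have hx1 : (0:ℝ) < x₁ := lt_of_lt_of_le hx2 hx12
    have hd2 : (0:ℝ) < d₂ := lt_of_lt_of_le hd3 hd23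
    have hd1 : (0:ℝ) < d₂ := hd2
    have hd1' : (0:ℝ) < d₁ := lt_of_lt_of_le hd2 hd12
    have hprod : x₁^2*x₂^2*x₃^2 = d₁^2*d₂^2*d₃^2 := by
      linear_combination (x₁*x₂*x₃ + d₁*d₂*d₃) * h3
    have he2 : d₁^2*d₂^2 + d₁^2*d₃^2 + d₂^2*d₃^2 ≤ x₁^2*x₂^2 + x₁^2*x₃^2 + x₂^2*x₃^2 := by
      have hxe : 1/x₁^2+1/x₂^2+1/x₃^2
          = (x₁^2*x₂^2 + x₁^2*x₃^2 + x₂^2*x₃^2)/(x₁^2*x₂^2*x₃^2) := by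
        field_simp
        ring
      have hde : 1/d₁^2+1/d₂^2+1/d₃^2
          = (d₁^2*d₂^2 + d₁^2*d₃^2 + d₂^2*d₃^2)/(d₁^2*d₂^2*d₃^2) := by
        field_simp
        ring
      rw [hxe, hde, ← hprod] at h2
      exact (div_le_div_iff_of_pos_right (by positivity)).mp h2
    have hlogsum : Real.log (x₁^2) + Real.log (x₂^2) + Real.log (x₃^2)
        = Real.log (d₁^2) + Real.log (d₂^2) + Real.log (d₃^2) := by
      have hx : Real.log (x₁^2*x₂^2*x₃^2)
          = Real.log (x₁^2) + Real.log (x₂^2) + Real.log (x₃^2) := by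
        rw [Real.log_mul (by positivity) (by positivity),
          Real.log_mul (by positivity) (by positivity)]
      have hd : Real.log (d₁^2*d₂^2*d₃^2)
          = Real.log (d₁^2) + Real.log (d₂^2) + Real.log (d₃^2) := by
        rw [Real.log_mul (by positivity) (by positivity),
          Real.log_mul (by positivity) (by positivity)]
      rw [← hx, ← hd, hprod]
    have i1 := slker_integrable (x₁^2) (by positivity)
    have i2 := slker_integrable (x₂^2) (by positivity)
    have i3 := slker_integrable (x₃^2) (by positivity)
    have i4 := slker_integrable (d₁^2) (by positivity)
    have i5 := slker_integrable (d₂^2) (by positivity)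
    have i6 := slker_integrable (d₃^2) (by positivity)
    have j12 : IntegrableOn (fun t => slker (x₁^2) t + slker (x₂^2) t) (Ioi 0) := i1.add i2
    have j123 : IntegrableOn (fun t => slker (x₁^2) t + slker (x₂^2) t + slker (x₃^2) t)
        (Ioi 0) := j12.add i3
    have j4 : IntegrableOn (fun t => slker (x₁^2) t + slker (x₂^2) t + slker (x₃^2) t
        - slker (d₁^2) t) (Ioi 0) := j123.sub i4
    have j5 : IntegrableOn (fun t => slker (x₁^2) t + slker (x₂^2) t + slker (x₃^2) t
        - slker (d₁^2) t - slker (d₂^2) t) (Ioi 0) := j4.sub i5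
    have Fint : IntegrableOn (fun t => slker (x₁^2) t + slker (x₂^2) t + slker (x₃^2) t
        - slker (d₁^2) t - slker (d₂^2) t - slker (d₃^2) t) (Ioi 0) := j5.sub i6
    have hval : ∫ t in Ioi (0:ℝ), (slker (x₁^2) t + slker (x₂^2) t + slker (x₃^2) t
        - slker (d₁^2) t - slker (d₂^2) t - slker (d₃^2) t) = 0 := by
      rw [integral_sub j5 i6, integral_sub j4 i5, integral_sub j123 i4,
        integral_add j12 i3, integral_add i1 i2]
      rw [phi_eq (x₁^2) (by positivity), phi_eq (x₂^2) (by positivity),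
        phi_eq (x₃^2) (by positivity), phi_eq (d₁^2) (by positivity),
        phi_eq (d₂^2) (by positivity), phi_eq (d₃^2) (by positivity)]
      rw [Real.log_pow, Real.log_pow, Real.log_pow, Real.log_pow, Real.log_pow, Real.log_pow]
      push_cast
      linear_combination 4 * hEq
    have hF_eq : ∀ t : ℝ, 0 < t → slker (x₁^2) t + slker (x₂^2) t + slker (x₃^2) t
        - slker (d₁^2) t - slker (d₂^2) t - slker (d₃^2) t
        = 2/t * (Real.log ((x₁^2+t)*(x₂^2+t)*(x₃^2+t))
          - Real.log ((d₁^2+t)*(d₂^2+t)*(d₃^2+t))) := by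
      intro t ht
      have h1t : (0:ℝ) < 1 + t := by linarith
      rw [Real.log_mul (by positivity) (by positivity),
        Real.log_mul (by positivity) (by positivity),
        Real.log_mul (by positivity) (by positivity),
        Real.log_mul (by positivity) (by positivity)]
      simp only [slker]
      linear_combination (-(2/(t*(1+t)))) * hlogsum
    have hPQdiff : ∀ t : ℝ, (x₁^2+t)*(x₂^2+t)*(x₃^2+t) - (d₁^2+t)*(d₂^2+t)*(d₃^2+t)
        = ((x₁^2+x₂^2+x₃^2) - (d₁^2+d₂^2+d₃^2))*t^2
          + ((x₁^2*x₂^2 + x₁^2*x₃^2 + x₂^2*x₃^2) - (d₁^2*d₂^2 + d₁^2*d₃^2 + d₂^2*d₃^2))*t := by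
      intro t
      linear_combination hprod
    have hc1 : (0:ℝ) ≤ (x₁^2+x₂^2+x₃^2) - (d₁^2+d₂^2+d₃^2) := by linarith
    have hc2 : (0:ℝ) ≤ (x₁^2*x₂^2 + x₁^2*x₃^2 + x₂^2*x₃^2)
        - (d₁^2*d₂^2 + d₁^2*d₃^2 + d₂^2*d₃^2) := by linarith
    have hF0 : ∀ t : ℝ, 0 < t → 0 ≤ slker (x₁^2) t + slker (x₂^2) t + slker (x₃^2) t
        - slker (d₁^2) t - slker (d₂^2) t - slker (d₃^2) t := by
      intro t ht
      rw [hF_eq t ht]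
      have hQpos : (0:ℝ) < (d₁^2+t)*(d₂^2+t)*(d₃^2+t) := by positivity
      have hle : (d₁^2+t)*(d₂^2+t)*(d₃^2+t) ≤ (x₁^2+t)*(x₂^2+t)*(x₃^2+t) := by
        have q := hPQdiff t
        have q1 : 0 ≤ ((x₁^2+x₂^2+x₃^2) - (d₁^2+d₂^2+d₃^2))*t^2 :=
          mul_nonneg hc1 (sq_nonneg t)
        have q2 : 0 ≤ ((x₁^2*x₂^2 + x₁^2*x₃^2 + x₂^2*x₃^2)
            - (d₁^2*d₂^2 + d₁^2*d₃^2 + d₂^2*d₃^2))*t := mul_nonneg hc2 ht.le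
        linarith
      have hlog := Real.log_le_log hQpos hle
      have h2t : (0:ℝ) ≤ 2/t := by positivity
      exact mul_nonneg h2t (by linarith)
    have hkey : x₁^2+x₂^2+x₃^2 = d₁^2+d₂^2+d₃^2
        ∧ x₁^2*x₂^2 + x₁^2*x₃^2 + x₂^2*x₃^2 = d₁^2*d₂^2 + d₁^2*d₃^2 + d₂^2*d₃^2 := by
      by_contra hcon
      have hpos0 : 0 < ((x₁^2+x₂^2+x₃^2) - (d₁^2+d₂^2+d₃^2))
          + ((x₁^2*x₂^2 + x₁^2*x₃^2 + x₂^2*x₃^2) - (d₁^2*d₂^2 + d₁^2*d₃^2 + d₂^2*d₃^2)) := by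
        by_contra hno
        push_neg at hno
        exact hcon ⟨by linarith, by linarith⟩
      have hFpos : ∀ t ∈ Ioo (1:ℝ) 2, 0 < slker (x₁^2) t + slker (x₂^2) t + slker (x₃^2) t
          - slker (d₁^2) t - slker (d₂^2) t - slker (d₃^2) t := by
        intro t ht
        have ht1 : (1:ℝ) < t := ht.1
        have ht0 : (0:ℝ) < t := by linarith
        rw [hF_eq t ht0]
        have hQpos : (0:ℝ) < (d₁^2+t)*(d₂^2+t)*(d₃^2+t) := by positivity
        have hlt : (d₁^2+t)*(d₂^2+t)*(d₃^2+t) < (x₁^2+t)*(x₂^2+t)*(x₃^2+t) := by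
          have q := hPQdiff t
          have ht2 : (1:ℝ) ≤ t^2 := by nlinarith
          have q1 : ((x₁^2+x₂^2+x₃^2) - (d₁^2+d₂^2+d₃^2)) * 1
              ≤ ((x₁^2+x₂^2+x₃^2) - (d₁^2+d₂^2+d₃^2)) * t^2 :=
            mul_le_mul_of_nonneg_left ht2 hc1
          have q2 : ((x₁^2*x₂^2 + x₁^2*x₃^2 + x₂^2*x₃^2)
              - (d₁^2*d₂^2 + d₁^2*d₃^2 + d₂^2*d₃^2)) * 1
              ≤ ((x₁^2*x₂^2 + x₁^2*x₃^2 + x₂^2*x₃^2)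
              - (d₁^2*d₂^2 + d₁^2*d₃^2 + d₂^2*d₃^2)) * t :=
            mul_le_mul_of_nonneg_left ht1.le hc2
          linarith
        have hlog := Real.log_lt_log hQpos hlt
        exact mul_pos (by positivity) (by linarith)
      have hii : IntervalIntegrable (fun t => slker (x₁^2) t + slker (x₂^2) t + slker (x₃^2) t
          - slker (d₁^2) t - slker (d₂^2) t - slker (d₃^2) t) volume 1 2 := by
        rw [intervalIntegrable_iff_integrableOn_Ioc_of_le (by norm_num : (1:ℝ) ≤ 2)]
        exact Fint.mono_set (fun t ht => lt_trans zero_lt_one ht.1)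
      have hpos2 := intervalIntegral.intervalIntegral_pos_of_pos_on hii hFpos one_lt_two
      rw [intervalIntegral.integral_of_le (by norm_num : (1:ℝ) ≤ 2)] at hpos2
      have hmono : ∫ t in Ioc (1:ℝ) 2, (slker (x₁^2) t + slker (x₂^2) t + slker (x₃^2) t
          - slker (d₁^2) t - slker (d₂^2) t - slker (d₃^2) t)
          ≤ ∫ t in Ioi (0:ℝ), (slker (x₁^2) t + slker (x₂^2) t + slker (x₃^2) t
          - slker (d₁^2) t - slker (d₂^2) t - slker (d₃^2) t) := by
        apply setIntegral_mono_set Fint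
        · rw [EventuallyLE, ae_restrict_iff' measurableSet_Ioi]
          filter_upwards with t ht
          exact hF0 t ht
        · exact HasSubset.Subset.eventuallyLE (fun t ht => lt_trans zero_lt_one ht.1)
      rw [hval] at hmono
      linarith
    obtain ⟨hk1, hk2⟩ := hkey
    have hsq := triple_eq (x₁^2) (x₂^2) (x₃^2) (d₁^2) (d₂^2) (d₃^2)
      (pow_le_pow_left₀ hx2.le hx12 2) (pow_le_pow_left₀ hx3.le hx23 2)
      (pow_le_pow_left₀ hd2.le hd12 2) (pow_le_pow_left₀ hd3.le hd23 2)
      hk1 hk2 hprod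
    obtain ⟨s1, s2, s3⟩ := hsq
    refine ⟨?_, ?_, ?_⟩
    · have : (x₁ - d₁)*(x₁ + d₁) = 0 := by linear_combination s1
      rcases mul_eq_zero.1 this with h | h
      · linarith
      · exfalso; linarith
    · have : (x₂ - d₂)*(x₂ + d₂) = 0 := by linear_combination s2
      rcases mul_eq_zero.1 this with h | h
      · linarith
      · exfalso; linarith
    · have : (x₃ - d₃)*(x₃ + d₃) = 0 := by linear_combination s3
      rcases mul_eq_zero.1 this with h | h
      · linarith
      · exfalso; linarith
  · rintro ⟨e1, e2, e3⟩
    rw [e1, e2, e3]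
end

section
/- For every complex n×n matrix X, the spectral (operator 2-) norm satisfies ‖exp X‖₂ ≤ ‖exp(sym X)‖₂, where sym X = (X + X*)/2. -/
open Matrix

/-- Spectral norm (largest singular value) of a complex matrix. -/
noncomputable def specNorm {n : ℕ} (X : Matrix (Fin n) (Fin n) ℂ) : ℝ :=
  ‖Matrix.toEuclideanCLM (𝕜 := ℂ) X‖

set_option maxHeartbeats 1600000
set_option synthInstance.maxHeartbeats 400000
open NormedSpace

lemma exp_apply_eigen {E : Type*} [NormedAddCommGroup E] [NormedSpace ℂ E] [CompleteSpace E]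
    (T : E →L[ℂ] E) (c : ℂ) (v : E) (h : T v = c • v) :
    exp T v = Complex.exp c • v := by
  have hpow : ∀ k : ℕ, (T ^ k) v = c ^ k • v := by
    intro k; induction k with
    | zero => simp
    | succ k ih =>
      rw [pow_succ, ContinuousLinearMap.mul_apply, h, ContinuousLinearMap.map_smul, ih,
        smul_smul, pow_succ, mul_comm]
  have hs : Summable (fun k : ℕ => ((k.factorial : ℂ))⁻¹ • T ^ k) := expSeries_summable' T
  have h1 : exp T v = ∑' k : ℕ, (((k.factorial : ℂ))⁻¹ • T ^ k) v := by
    rw [exp_eq_tsum ℂ]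
    exact ((hs.hasSum.mapL (ContinuousLinearMap.apply ℂ E v)).tsum_eq).symm
  rw [h1]
  have h2 : ∀ k : ℕ, (((k.factorial : ℂ))⁻¹ • T ^ k) v = (((k.factorial : ℂ))⁻¹ • c ^ k) • v := by
    intro k
    rw [ContinuousLinearMap.smul_apply, hpow, smul_smul, smul_eq_mul]
  simp_rw [h2]
  rw [Summable.tsum_smul_const (expSeries_summable' (𝕂 := ℂ) c),
    show (∑' (z:ℕ), ((z.factorial : ℂ))⁻¹ • c ^ z) = Complex.exp c from by
      rw [Complex.exp_eq_exp_ℂ, exp_eq_tsum ℂ]]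

lemma opNorm_exp_le_opNorm_exp_sym {N : ℕ}
    (T : EuclideanSpace ℂ (Fin N) →L[ℂ] EuclideanSpace ℂ (Fin N)) :
    ‖exp T‖ ≤ ‖exp ((1 / 2 : ℂ) • (T + star T))‖ := by
  rcases Nat.eq_zero_or_pos N with hN | hN
  · subst hN
    exact le_of_eq (congrArg norm (congrArg exp (Subsingleton.elim _ _)))
  set E := EuclideanSpace ℂ (Fin N)
  set A : E →L[ℂ] E := (1 / 2 : ℂ) • (T + star T) with hAdef
  have hA : _root_.IsSelfAdjoint A := by
    rw [_root_.IsSelfAdjoint, hAdef, star_smul, ContinuousLinearMap.star_eq_adjoint,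
      ContinuousLinearMap.star_eq_adjoint, map_add, ContinuousLinearMap.adjoint_adjoint]
    simp [add_comm]
  have hsym : (A : E →ₗ[ℂ] E).IsSymmetric := hA.isSymmetric
  have hrank : Module.finrank ℂ E = N := finrank_euclideanSpace_fin
  haveI : Nonempty (Fin N) := ⟨⟨0, hN⟩⟩
  obtain ⟨i₀, hi₀⟩ := Finite.exists_max (fun i => hsym.eigenvalues hrank i)
  set μ := hsym.eigenvalues hrank i₀ with hμdef
  set b := hsym.eigenvectorBasis hrank with hbdef
  -- Rayleigh bound
  have hray : ∀ v : E, Complex.re (inner (𝕜 := ℂ) v (A v)) ≤ μ * ‖v‖ ^ 2 := by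
    intro v
    have h3 : ∀ i, b.repr (A v) i = (hsym.eigenvalues hrank i : ℂ) * b.repr v i := fun i =>
      hsym.eigenvectorBasis_apply_self_apply hrank v i
    have h1 : inner (𝕜 := ℂ) v (A v)
        = ∑ i, (starRingEnd ℂ) (b.repr v i) * ((hsym.eigenvalues hrank i : ℂ) * b.repr v i) := by
      rw [← b.repr.inner_map_map v (A v), PiLp.inner_apply]
      congr 1
      ext i
      rw [h3 i]
      simp [RCLike.inner_apply]
      ring
    have h2 : ∀ i : Fin N, (starRingEnd ℂ) (b.repr v i) * ((hsym.eigenvalues hrank i : ℂ) * b.repr v i)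
        = ((hsym.eigenvalues hrank i * ‖b.repr v i‖ ^ 2 : ℝ) : ℂ) := by
      intro i
      rw [mul_comm ((hsym.eigenvalues hrank i : ℂ)), ← mul_assoc, RCLike.conj_mul]
      push_cast
      exact mul_comm _ _
    have hnorm : ∑ i, ‖b.repr v i‖ ^ 2 = ‖v‖ ^ 2 := by
      have hn := b.repr.norm_map v
      rw [← hn, EuclideanSpace.norm_eq, Real.sq_sqrt (by positivity)]
    rw [h1]
    simp_rw [h2]
    rw [← Complex.ofReal_sum, Complex.ofReal_re]
    calc ∑ i, hsym.eigenvalues hrank i * ‖b.repr v i‖ ^ 2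
        ≤ ∑ i, μ * ‖b.repr v i‖ ^ 2 := by
          refine Finset.sum_le_sum fun i _ => ?_
          exact mul_le_mul_of_nonneg_right (hi₀ i) (by positivity)
      _ = μ * ‖v‖ ^ 2 := by rw [← Finset.mul_sum, hnorm]
  -- re⟪w, Tw⟫ = re⟪w, Aw⟫
  have hTA : ∀ w : E, Complex.re (inner (𝕜 := ℂ) w (T w)) = Complex.re (inner (𝕜 := ℂ) w (A w)) := by
    intro w
    have hstar : inner (𝕜 := ℂ) w ((star T) w) = inner (𝕜 := ℂ) (T w) w := by
      rw [ContinuousLinearMap.star_eq_adjoint, ContinuousLinearMap.adjoint_inner_right]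
    have : inner (𝕜 := ℂ) w (A w)
        = (1/2 : ℂ) * (inner (𝕜 := ℂ) w (T w) + inner (𝕜 := ℂ) (T w) w) := by
      rw [hAdef]
      rw [ContinuousLinearMap.smul_apply, inner_smul_right, ContinuousLinearMap.add_apply,
        inner_add_right, hstar]
    rw [this,
      show inner (𝕜 := ℂ) (T w) w = (starRingEnd ℂ) (inner (𝕜 := ℂ) w (T w)) from
        (inner_conj_symm _ _).symm,
      Complex.add_conj,
      show (1/2 : ℂ) * (((2 * Complex.re (inner (𝕜 := ℂ) w (T w)) : ℝ)) : ℂ) = ((Complex.re (inner (𝕜 := ℂ) w (T w)) : ℂ)) from by push_cast; ring,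
      Complex.ofReal_re]
  -- Gronwall
  have key : ∀ v : E, ‖exp T v‖ ≤ Real.exp μ * ‖v‖ := by
    intro v
    have hEE : (exp : (E →L[ℂ] E) → (E →L[ℂ] E)) = exp := rfl
    set u : ℝ → E := fun t => exp (t • T) v with hudef
    have hu : ∀ t : ℝ, HasDerivAt u (T (u t)) t := by
      intro t
      have h1 : HasDerivAt (fun s : ℝ => exp (s • T)) (T * exp (t • T)) t :=
        hasDerivAt_exp_smul_const' (𝕂 := ℝ) T t
      have h2 := ((ContinuousLinearMap.apply ℂ E v).restrictScalars ℝ).hasFDerivAt.comp_hasDerivAt t h1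
      exact h2
    set f : ℝ → ℝ := fun t => Complex.re (inner (𝕜 := ℂ) (u t) (u t)) with hfdef
    have hfval : ∀ t, f t = ‖u t‖ ^ 2 := fun t => inner_self_eq_norm_sq (𝕜 := ℂ) (u t)
    have hf : ∀ t, HasDerivAt f (2 * Complex.re (inner (𝕜 := ℂ) (u t) (A (u t)))) t := by
      intro t
      have h1 : HasDerivAt (fun s => inner (𝕜 := ℂ) (u s) (u s))
          (inner (𝕜 := ℂ) (u t) (T (u t)) + inner (𝕜 := ℂ) (T (u t)) (u t)) t :=
        (hu t).inner (𝕜 := ℂ) (hu t)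
      have h2 := Complex.reCLM.hasFDerivAt.comp_hasDerivAt t h1
      have h3 : Complex.reCLM (inner (𝕜 := ℂ) (u t) (T (u t)) + inner (𝕜 := ℂ) (T (u t)) (u t))
          = 2 * Complex.re (inner (𝕜 := ℂ) (u t) (A (u t))) := by
        rw [show inner (𝕜 := ℂ) (T (u t)) (u t)
            = (starRingEnd ℂ) (inner (𝕜 := ℂ) (u t) (T (u t))) from (inner_conj_symm _ _).symm,
          map_add]
        simp only [Complex.reCLM_apply, Complex.conj_re]
        rw [← hTA (u t)]
        ring
      rw [h3] at h2
      exact h2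
    set c : ℝ := 2 * μ with hcdef
    set g : ℝ → ℝ := fun t => f t * Real.exp (-c * t) with hgdef
    have hexp : ∀ t : ℝ, HasDerivAt (fun s : ℝ => Real.exp (-c * s)) (Real.exp (-c * t) * (-c)) t := by
      intro t
      simpa using ((hasDerivAt_id t).const_mul (-c)).exp
    have hg : ∀ t, HasDerivAt g
        ((2 * Complex.re (inner (𝕜 := ℂ) (u t) (A (u t)))) * Real.exp (-c * t)
          + f t * (Real.exp (-c * t) * (-c))) t := fun t => (hf t).mul (hexp t)
    have hg' : ∀ t, deriv g t ≤ 0 := by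
      intro t
      rw [(hg t).deriv]
      have h1 : Complex.re (inner (𝕜 := ℂ) (u t) (A (u t))) ≤ μ * f t := by
        rw [hfval t]; exact hray (u t)
      have h2 : (0:ℝ) < Real.exp (-c * t) := Real.exp_pos _
      have h3 : (2 * Complex.re (inner (𝕜 := ℂ) (u t) (A (u t)))) * Real.exp (-c * t)
          + f t * (Real.exp (-c * t) * (-c))
          = (2 * Complex.re (inner (𝕜 := ℂ) (u t) (A (u t))) - c * f t) * Real.exp (-c * t) := by
        ring
      rw [h3]
      apply mul_nonpos_of_nonpos_of_nonneg _ h2.le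
      rw [hcdef]
      linarith
    have hmono : Antitone g :=
      antitone_of_deriv_nonpos (fun t => (hg t).differentiableAt) hg'
    have h01 : g 1 ≤ g 0 := hmono (by norm_num)
    have hu0 : u 0 = v := by
      show exp ((0:ℝ) • T) v = v
      have hz : ((0:ℝ) • T) = 0 := zero_smul ℝ T
      rw [hz, exp_zero]; rfl
    have hu1 : u 1 = exp T v := by
      show exp ((1:ℝ) • T) v = exp T v
      have ho : ((1:ℝ) • T) = T := one_smul ℝ T
      rw [ho, hEE]
    have hf0e : f 0 = ‖v‖ ^ 2 := by rw [hfval, hu0]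
    have hf1e : f 1 = ‖exp T v‖ ^ 2 := by rw [hfval, hu1]
    have h01' : f 1 * Real.exp (-c) ≤ f 0 := by
      have hgg := h01
      simp only [hgdef] at hgg
      simpa using hgg
    have hf1le : f 1 ≤ Real.exp c * f 0 := by
      have hx := mul_le_mul_of_nonneg_right h01' (Real.exp_pos c).le
      rw [mul_assoc, ← Real.exp_add] at hx
      simpa [mul_comm] using hx
    have hineq : ‖exp T v‖ ^ 2 ≤ (Real.exp μ * ‖v‖) ^ 2 := by
      calc ‖exp T v‖ ^ 2 = f 1 := hf1e.symm
        _ ≤ Real.exp c * f 0 := hf1le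
        _ = (Real.exp μ * ‖v‖) ^ 2 := by
            have hsq : Real.exp c = Real.exp μ ^ 2 := by
              rw [hcdef, two_mul, Real.exp_add, sq]
            rw [hf0e, hsq, mul_pow]
    calc ‖exp T v‖ = Real.sqrt (‖exp T v‖ ^ 2) := (Real.sqrt_sq (norm_nonneg _)).symm
      _ ≤ Real.sqrt ((Real.exp μ * ‖v‖) ^ 2) := Real.sqrt_le_sqrt hineq
      _ = Real.exp μ * ‖v‖ := Real.sqrt_sq (by positivity)
  have upper : ‖exp T‖ ≤ Real.exp μ :=
    ContinuousLinearMap.opNorm_le_bound _ (Real.exp_nonneg μ) key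
  have lower : Real.exp μ ≤ ‖exp A‖ := by
    have hw1 : ‖b i₀‖ = 1 := b.orthonormal.1 i₀
    have hAw : A (b i₀) = ((μ : ℂ)) • b i₀ := hsym.apply_eigenvectorBasis hrank i₀
    have he := exp_apply_eigen A (μ : ℂ) (b i₀) hAw
    have hnorm : ‖exp A (b i₀)‖ = Real.exp μ := by
      rw [he, norm_smul, hw1, mul_one, Complex.norm_exp]
      simp
    calc Real.exp μ = ‖exp A (b i₀)‖ := hnorm.symm
      _ ≤ ‖exp A‖ * ‖b i₀‖ := ContinuousLinearMap.le_opNorm _ _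
      _ = ‖exp A‖ := by rw [hw1, mul_one]
  exact upper.trans lower

section Glue
open scoped Matrix.Norms.L2Operator

noncomputable def specNormAux {n : ℕ} (X : Matrix (Fin n) (Fin n) ℂ) : ℝ :=
  ‖Matrix.toEuclideanCLM (𝕜 := ℂ) X‖

theorem specNormAux_exp_le {n : ℕ} (X : Matrix (Fin n) (Fin n) ℂ) :
    specNormAux (NormedSpace.exp X) ≤ specNormAux (NormedSpace.exp ((1 / 2 : ℂ) • (X + Xᴴ))) := by
  have hc : Continuous ⇑(toEuclideanCLM (𝕜 := ℂ) (n := Fin n)) :=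
    (AddMonoidHomClass.isometry_of_norm _ (fun a => (cstar_norm_def a).symm)).continuous
  letI : NormedAlgebra ℚ (Matrix (Fin n) (Fin n) ℂ) := .restrictScalars ℚ ℂ _
  have h1 : toEuclideanCLM (𝕜 := ℂ) (exp X) = exp (toEuclideanCLM (𝕜 := ℂ) X) :=
    map_exp _ hc X
  have h2 : toEuclideanCLM (𝕜 := ℂ) (exp ((1 / 2 : ℂ) • (X + Xᴴ)))
      = exp ((1 / 2 : ℂ) • (toEuclideanCLM (𝕜 := ℂ) X + star (toEuclideanCLM (𝕜 := ℂ) X))) := by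
    rw [map_exp _ hc]
    congr 1
    rw [_root_.map_smul, map_add]
    congr 2
    rw [← Matrix.star_eq_conjTranspose, map_star]
  unfold specNormAux
  rw [h1, h2]
  exact opNorm_exp_le_opNorm_exp_sym _

end Glue

/-- `‖exp X‖₂ ≤ ‖exp (sym X)‖₂` for the spectral norm. -/
theorem specNorm_exp_le_exp_sym {n : ℕ} (X : Matrix (Fin n) (Fin n) ℂ) :
    specNorm (NormedSpace.exp X) ≤ specNorm (NormedSpace.exp ((1 / 2 : ℂ) • (X + Xᴴ))) := by
  exact specNormAux_exp_le X
end

section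
/- Let Z ∈ ℂ³ˣ³ be nonsingular with polar decomposition Z = U_p H. Then in the Frobenius norm, min over Q ∈ U(3) and all logarithms X with exp X = Q* Z of ‖X‖_F² equals ‖log H‖_F², attained at Q = U_p with X = log H the principal logarithm. -/
open Matrix
open scoped ComplexOrder

/-- Squared Frobenius norm. -/
noncomputable def frobSq (X : Matrix (Fin 3) (Fin 3) ℂ) : ℝ :=
  ∑ i, ∑ j, ‖X i j‖ ^ 2

open NormedSpace

noncomputable abbrev M3' := Matrix (Fin 3) (Fin 3) ℂ

/-! ### Pure real-number lemmas -/

lemma key3sorted (m M p a b c : ℝ) (hab : b ≤ a) (hbc : c ≤ b)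
    (h2 : p ≤ M) (h1 : m ≤ p) (ha2 : a ≤ M) (hc1 : m ≤ c)
    (hsum : a + b + c = M + m + p) : a^2 + b^2 + c^2 ≤ M^2 + m^2 + p^2 := by
  have hc0 : c * (a + b + c - (M + m + p)) = 0 := by rw [hsum]; ring
  nlinarith [sq_nonneg (M - a), sq_nonneg (p - b), sq_nonneg (m - c),
    mul_nonneg (sub_nonneg.2 ha2) (sub_nonneg.2 hab),
    mul_nonneg (by linarith : (0:ℝ) ≤ M + p - a - b) (sub_nonneg.2 hbc), hc0]

lemma key3_s14 (m M p a b c : ℝ) (h1 : m ≤ p) (h2 : p ≤ M) (ha1 : m ≤ a) (ha2 : a ≤ M)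
    (hb1 : m ≤ b) (hb2 : b ≤ M) (hc1 : m ≤ c) (hc2 : c ≤ M)
    (hsum : a + b + c = M + m + p) : a^2 + b^2 + c^2 ≤ M^2 + m^2 + p^2 := by
  rcases le_total a b with h | h <;> rcases le_total b c with h' | h' <;>
      rcases le_total a c with h'' | h'' <;>
  [ (have := key3sorted m M p c b a h' h h2 h1 hc2 ha1 (by linarith));
    (have := key3sorted m M p c b a h' h h2 h1 hc2 ha1 (by linarith));
    (have := key3sorted m M p b c a h' h'' h2 h1 hb2 ha1 (by linarith));
    (have := key3sorted m M p b a c h h'' h2 h1 hb2 hc1 (by linarith));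
    (have := key3sorted m M p c a b h'' h h2 h1 hc2 hb1 (by linarith));
    (have := key3sorted m M p a c b h'' h' h2 h1 ha2 hb1 (by linarith));
    (have := key3sorted m M p a b c h h' h2 h1 ha2 hc1 hsum);
    (have := key3sorted m M p a b c h h' h2 h1 ha2 hc1 hsum)] <;> linarith

/-! ### Complex scalar helpers -/

lemma re_conj_mul_self (z : ℂ) : (star z * z).re = Complex.normSq z := by
  rw [show star z * z = z * star z from mul_comm _ _,
    show star z = (starRingEnd ℂ) z from rfl, Complex.mul_conj, Complex.ofReal_re]

lemma re_conj_smul (a : ℝ) (z : ℂ) : (star z * ((a : ℂ) * z)).re = a * Complex.normSq z := by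
  rw [show star z * ((a:ℂ) * z) = (a:ℂ) * (z * star z) from by ring,
    show star z = (starRingEnd ℂ) z from rfl, Complex.mul_conj, ← Complex.ofReal_mul,
    Complex.ofReal_re]

/-! ### Frobenius norm lemmas -/

lemma frobSq_eq_re_trace (M : M3') : frobSq M = (Matrix.trace (Mᴴ * M)).re := by
  rw [frobSq, Matrix.trace]
  simp only [Matrix.diag, Matrix.mul_apply, Matrix.conjTranspose_apply, Complex.re_sum]
  rw [Finset.sum_comm]
  refine Finset.sum_congr rfl fun i _ => Finset.sum_congr rfl fun j _ => ?_
  rw [re_conj_mul_self]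
  simp [Complex.normSq_eq_norm_sq]

lemma trace_conj_unitary (U : Matrix.unitaryGroup (Fin 3) ℂ) (A : M3') :
    Matrix.trace ((U : M3') * A * (star U : M3')) = Matrix.trace A := by
  rw [Matrix.trace_mul_cycle]
  have h : (star U : M3') * (U : M3') = 1 := Matrix.UnitaryGroup.star_mul_self U
  rw [h, Matrix.one_mul]

lemma frobSq_hermitian (M : M3') (hM : M.IsHermitian) :
    frobSq M = ∑ i, hM.eigenvalues i ^ 2 := by
  rw [frobSq_eq_re_trace]
  have key := hM.spectral_theorem
  rw [Unitary.conjStarAlgAut_apply] at key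
  set U := hM.eigenvectorUnitary with hU
  set D : M3' := Matrix.diagonal (RCLike.ofReal ∘ hM.eigenvalues) with hD
  have hDh : Dᴴ = D := by
    ext i j
    by_cases h : i = j
    · simp [hD, Matrix.conjTranspose_apply, Matrix.diagonal_apply, h, Complex.conj_ofReal]
    · simp [hD, Matrix.conjTranspose_apply, Matrix.diagonal_apply, h]
      exact fun hji => absurd hji.symm h
  have hUU : ((U : M3'))ᴴ * (U : M3') = 1 := by
    have := Matrix.UnitaryGroup.star_mul_self U
    simpa [Matrix.star_eq_conjTranspose] using this
  have h2 : Mᴴ * M = (U : M3') * (D * D) * ((U : M3'))ᴴ := by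
    rw [key]
    simp only [Matrix.conjTranspose_mul, Matrix.conjTranspose_conjTranspose, hDh,
      Matrix.star_eq_conjTranspose, Matrix.mul_assoc]
    rw [← Matrix.mul_assoc ((U : M3'))ᴴ ((U : M3')), hUU, Matrix.one_mul]
  rw [h2, show ((U : M3'))ᴴ = (star U : M3') from rfl, trace_conj_unitary U (D * D)]
  rw [hD, Matrix.diagonal_mul_diagonal, Matrix.trace_diagonal]
  simp [Complex.re_sum, pow_two]

lemma frobSq_add_conjTranspose_le (X : M3') : frobSq (X + Xᴴ) ≤ 4 * frobSq X := by
  have h : ∀ i j, ‖(X + Xᴴ) i j‖^2 ≤ 2*‖X i j‖^2 + 2*‖X j i‖^2 := by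
    intro i j
    have h0 : (X + Xᴴ) i j = X i j + star (X j i) := rfl
    have h1 : ‖(X + Xᴴ) i j‖ ≤ ‖X i j‖ + ‖X j i‖ := by
      rw [h0]
      calc ‖X i j + star (X j i)‖ ≤ ‖X i j‖ + ‖star (X j i)‖ := norm_add_le _ _
        _ = ‖X i j‖ + ‖X j i‖ := by rw [norm_star]
    nlinarith [norm_nonneg (X i j), norm_nonneg (X j i), sq_nonneg (‖X i j‖ - ‖X j i‖),
      norm_nonneg ((X + Xᴴ) i j)]
  have h2 : frobSq (X + Xᴴ) ≤ ∑ i, ∑ j, (2*‖X i j‖^2 + 2*‖X j i‖^2) := by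
    rw [frobSq]
    exact Finset.sum_le_sum fun i _ => Finset.sum_le_sum fun j _ => h i j
  have h3 : ∑ i, ∑ j, (2*‖X i j‖^2 + 2*‖X j i‖^2) = 4 * frobSq X := by
    rw [frobSq]
    simp only [Finset.sum_add_distrib]
    rw [show ∑ i, ∑ j, 2*‖X j i‖^2 = ∑ i, ∑ j, 2*‖X i j‖^2 from Finset.sum_comm]
    rw [← Finset.sum_add_distrib]
    rw [Finset.mul_sum]
    refine Finset.sum_congr rfl fun i _ => ?_
    rw [← Finset.sum_add_distrib, Finset.mul_sum]
    exact Finset.sum_congr rfl fun j _ => by ring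
  linarith

/-! ### Rayleigh quotient bounds -/

lemma rayleigh_expand (M : M3') (hM : M.IsHermitian) (w : Fin 3 → ℂ) :
    (star w ⬝ᵥ (M *ᵥ w)).re
      = ∑ i, hM.eigenvalues i * Complex.normSq ((star (hM.eigenvectorUnitary : M3') *ᵥ w) i)
    ∧ (star w ⬝ᵥ w).re = ∑ i, Complex.normSq ((star (hM.eigenvectorUnitary : M3') *ᵥ w) i) := by
  set U := hM.eigenvectorUnitary with hU
  set y : Fin 3 → ℂ := (star U : M3') *ᵥ w with hy
  have hUU : (U : M3') * ((U : M3'))ᴴ = 1 := by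
    simpa [Matrix.star_eq_conjTranspose] using Matrix.mem_unitaryGroup_iff.mp U.2
  have hsy : star y = star w ᵥ* (U : M3') := by
    rw [hy, Matrix.star_mulVec, Matrix.star_eq_conjTranspose, Matrix.conjTranspose_conjTranspose]
  constructor
  · nth_rewrite 1 [hM.spectral_theorem, Unitary.conjStarAlgAut_apply]
    have h1 : star w ⬝ᵥ (((U : M3') * Matrix.diagonal (RCLike.ofReal ∘ hM.eigenvalues) * (star U : M3')) *ᵥ w)
        = star y ⬝ᵥ (Matrix.diagonal (RCLike.ofReal ∘ hM.eigenvalues) *ᵥ y) := by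
      rw [← Matrix.mulVec_mulVec, ← Matrix.mulVec_mulVec, Matrix.dotProduct_mulVec (star w), hsy]
    rw [h1]
    simp only [dotProduct, Matrix.mulVec_diagonal, Pi.star_apply, Complex.re_sum]
    refine Finset.sum_congr rfl fun i _ => ?_
    exact re_conj_smul (hM.eigenvalues i) (y i)
  · have h2 : star y ⬝ᵥ y = star w ⬝ᵥ w := by
      rw [hy, Matrix.star_mulVec, ← Matrix.dotProduct_mulVec, Matrix.mulVec_mulVec,
        Matrix.star_eq_conjTranspose, Matrix.conjTranspose_conjTranspose, hUU, Matrix.one_mulVec]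
    rw [← h2]
    simp only [dotProduct, Pi.star_apply, Complex.re_sum]
    exact Finset.sum_congr rfl fun i _ => re_conj_mul_self (y i)

lemma rayleigh_upper (M : M3') (hM : M.IsHermitian) (c : ℝ)
    (hc : ∀ i, hM.eigenvalues i ≤ c) (w : Fin 3 → ℂ) :
    (star w ⬝ᵥ (M *ᵥ w)).re ≤ c * (star w ⬝ᵥ w).re := by
  obtain ⟨h1, h2⟩ := rayleigh_expand M hM w
  rw [h1, h2, Finset.mul_sum]
  exact Finset.sum_le_sum fun i _ =>
    mul_le_mul_of_nonneg_right (hc i) (Complex.normSq_nonneg _)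

lemma rayleigh_lower (M : M3') (hM : M.IsHermitian) (c : ℝ)
    (hc : ∀ i, c ≤ hM.eigenvalues i) (w : Fin 3 → ℂ) :
    c * (star w ⬝ᵥ w).re ≤ (star w ⬝ᵥ (M *ᵥ w)).re := by
  obtain ⟨h1, h2⟩ := rayleigh_expand M hM w
  rw [h1, h2, Finset.mul_sum]
  exact Finset.sum_le_sum fun i _ =>
    mul_le_mul_of_nonneg_right (hc i) (Complex.normSq_nonneg _)

/-! ### dot product identities -/

lemma dot_conjTranspose_mul (E : M3') (v : Fin 3 → ℂ) :
    star v ⬝ᵥ ((Eᴴ * E) *ᵥ v) = star (E *ᵥ v) ⬝ᵥ (E *ᵥ v) := by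
  rw [← Matrix.mulVec_mulVec, Matrix.dotProduct_mulVec, ← Matrix.star_mulVec]

lemma unit_col (V : Matrix.unitaryGroup (Fin 3) ℂ) (j : Fin 3) :
    star ((V : M3') *ᵥ Pi.single j 1) ⬝ᵥ ((V : M3') *ᵥ Pi.single j 1) = 1 := by
  rw [Matrix.star_mulVec, ← Matrix.dotProduct_mulVec, Matrix.mulVec_mulVec]
  rw [show ((V : M3'))ᴴ * (V : M3') = 1 from by
    simpa [Matrix.star_eq_conjTranspose] using Matrix.UnitaryGroup.star_mul_self V,
    Matrix.one_mulVec]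
  simp [dotProduct, Pi.single_apply]

lemma conj_diag_quadform (V : Matrix.unitaryGroup (Fin 3) ℂ) (d : Fin 3 → ℂ) (j : Fin 3) :
    star ((V : M3') *ᵥ Pi.single j 1) ⬝ᵥ
      (((V : M3') * Matrix.diagonal d * (star V : M3')) *ᵥ ((V : M3') *ᵥ Pi.single j 1)) = d j := by
  have h1 : ((V : M3') * Matrix.diagonal d * (star V : M3')) *ᵥ ((V : M3') *ᵥ Pi.single j 1)
      = d j • ((V : M3') *ᵥ Pi.single j 1) := by
    rw [Matrix.mulVec_mulVec, Matrix.mul_assoc ((V : M3') * Matrix.diagonal d),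
      Matrix.UnitaryGroup.star_mul_self V, Matrix.mul_one,
      ← Matrix.mulVec_mulVec, Matrix.diagonal_mulVec_single]
    rw [show (Pi.single j (d j * 1) : Fin 3 → ℂ) = d j • (Pi.single j 1 : Fin 3 → ℂ) from by
      funext k
      by_cases h : k = j
      · subst h; simp
      · simp [Pi.single_apply, h]]
    rw [Matrix.mulVec_smul]
  rw [h1, dotProduct_smul, unit_col V j, smul_eq_mul, mul_one]

/-! ### unitary determinant -/

lemma abs_det_unitary {Q : M3'} (hQ : Q ∈ Matrix.unitaryGroup (Fin 3) ℂ) :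
    ‖Matrix.det Q‖ = 1 := by
  have h := Matrix.mem_unitaryGroup_iff'.mp hQ
  have h2 := congrArg Matrix.det h
  rw [Matrix.det_mul, Matrix.det_one, Matrix.star_eq_conjTranspose,
    Matrix.det_conjTranspose] at h2
  have h3 : Complex.normSq (Matrix.det Q) = 1 := by
    have h4 : ((Complex.normSq (Matrix.det Q) : ℝ) : ℂ) = 1 := by
      rw [← h2, show star (Matrix.det Q) = (starRingEnd ℂ) (Matrix.det Q) from rfl,
        mul_comm, Complex.mul_conj]
    exact_mod_cast h4
  have h4 := Complex.sq_norm (Matrix.det Q)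
  nlinarith [norm_nonneg (Matrix.det Q)]

/-! ### unitary conjugation and exp -/

lemma exp_unitary_conj (U : Matrix.unitaryGroup (Fin 3) ℂ) (A : M3') :
    exp ((U : M3') * A * (star U : M3')) = (U : M3') * exp A * (star U : M3') := by
  have hU : IsUnit (U : M3') :=
    ⟨⟨(U : M3'), (star U : M3'), Matrix.mem_unitaryGroup_iff.mp U.2,
      Matrix.UnitaryGroup.star_mul_self U⟩, rfl⟩
  have hinv : (U : M3')⁻¹ = (star U : M3') :=
    Matrix.inv_eq_right_inv (Matrix.mem_unitaryGroup_iff.mp U.2)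
  rw [← hinv, Matrix.exp_conj _ A hU]

/-! ### analytic lemmas (Gronwall bound and determinant of exp) -/

section Analytic

attribute [local instance] Matrix.linftyOpNormedRing Matrix.linftyOpNormedAlgebra

noncomputable def coordCLM (v : Fin 3 → ℂ) (i : Fin 3) : M3' →L[ℝ] ℂ :=
  LinearMap.toContinuousLinearMap
    { toFun := fun M => (M *ᵥ v) i
      map_add' := by intro M N; simp [Matrix.add_mulVec]
      map_smul' := by
        intro r M
        simp [Matrix.mulVec, dotProduct, Finset.mul_sum, Matrix.smul_apply, mul_assoc] }

noncomputable def entryCLM (i j : Fin 3) : M3' →L[ℝ] ℂ :=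
  LinearMap.toContinuousLinearMap
    { toFun := fun M => M i j
      map_add' := by intro M N; rfl
      map_smul' := by intro r M; rfl }

lemma exp_mulVec_sq_bound' (Y : M3') (c : ℝ)
    (hY : ∀ w : Fin 3 → ℂ, (star w ⬝ᵥ ((Y + Yᴴ) *ᵥ w)).re ≤ 2 * c * (star w ⬝ᵥ w).re)
    (v : Fin 3 → ℂ) :
    (star (exp Y *ᵥ v) ⬝ᵥ (exp Y *ᵥ v)).re ≤ Real.exp (2 * c) * (star v ⬝ᵥ v).re := by
  set u : ℝ → Fin 3 → ℂ := fun t => exp (t • Y) *ᵥ v with hu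
  set φ : ℝ → ℝ := fun t => (star (u t) ⬝ᵥ u t).re with hφ
  have hder : ∀ t, HasDerivAt φ ((star (Y *ᵥ u t) ⬝ᵥ u t + star (u t) ⬝ᵥ (Y *ᵥ u t)).re) t := by
    intro t
    have hexp : HasDerivAt (fun s : ℝ => exp (s • Y)) (Y * exp (t • Y)) t := by
      exact hasDerivAt_exp_smul_const' Y t
    have hcoord : ∀ i, HasDerivAt (fun s => u s i) ((Y *ᵥ u t) i) t := by
      intro i
      have := (coordCLM v i).hasFDerivAt.comp_hasDerivAt t hexp
      exact this.congr_deriv (show ((Y * exp (t • Y)) *ᵥ v) i = (Y *ᵥ (exp (t • Y) *ᵥ v)) i by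
        rw [Matrix.mulVec_mulVec])
    have hsum : HasDerivAt (fun s => star (u s) ⬝ᵥ u s)
        (star (Y *ᵥ u t) ⬝ᵥ u t + star (u t) ⬝ᵥ (Y *ᵥ u t)) t := by
      have h : ∀ i ∈ Finset.univ, HasDerivAt (fun s => star (u s i) * u s i)
          (star ((Y *ᵥ u t) i) * u t i + star (u t i) * (Y *ᵥ u t) i) t := by
        intro i _
        exact ((hcoord i).star.mul (hcoord i))
      have := HasDerivAt.fun_sum h
      simpa [dotProduct, Finset.sum_add_distrib] using this
    exact (Complex.reCLM.hasFDerivAt.comp_hasDerivAt t hsum)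
  have hderle : ∀ t, (star (Y *ᵥ u t) ⬝ᵥ u t + star (u t) ⬝ᵥ (Y *ᵥ u t)).re ≤ 2 * c * φ t := by
    intro t
    have h1 : (star (Y *ᵥ u t) ⬝ᵥ u t) = starRingEnd ℂ (star (u t) ⬝ᵥ (Y *ᵥ u t)) := by
      rw [show star (Y *ᵥ u t) ⬝ᵥ u t = u t ⬝ᵥ star (Y *ᵥ u t) from dotProduct_comm _ _]
      simp [dotProduct, map_sum, mul_comm]
    have h2 := hY (u t)
    rw [Matrix.add_mulVec] at h2
    rw [h1]
    have h3 : (starRingEnd ℂ (star (u t) ⬝ᵥ (Y *ᵥ u t)) + star (u t) ⬝ᵥ (Y *ᵥ u t)).re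
        = (star (u t) ⬝ᵥ (Y *ᵥ u t) + star (u t) ⬝ᵥ (Yᴴ *ᵥ u t)).re := by
      rw [show (star (u t) ⬝ᵥ (Yᴴ *ᵥ u t)) = starRingEnd ℂ (star (u t) ⬝ᵥ (Y *ᵥ u t)) from by
        rw [Matrix.dotProduct_mulVec, ← Matrix.star_mulVec]
        rw [show star (u t) ⬝ᵥ (Y *ᵥ u t) = (Y *ᵥ u t) ⬝ᵥ star (u t) from dotProduct_comm _ _]
        simp [dotProduct, Complex.mul_conj, map_sum, mul_comm]]
      simp [Complex.add_re, Complex.conj_re]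
    rw [h3]
    simp only [hφ]
    simpa [dotProduct_add] using h2
  set ψ : ℝ → ℝ := fun t => Real.exp (-(2 * c) * t) * φ t with hψ
  have hψder : ∀ t, HasDerivAt ψ
      (Real.exp (-(2 * c) * t) * ((star (Y *ᵥ u t) ⬝ᵥ u t + star (u t) ⬝ᵥ (Y *ᵥ u t)).re)
        + (-(2 * c) * Real.exp (-(2 * c) * t)) * φ t) t := by
    intro t
    have h1 : HasDerivAt (fun t : ℝ => Real.exp (-(2 * c) * t))
        (-(2 * c) * Real.exp (-(2 * c) * t)) t := by
      have hl : HasDerivAt (fun t : ℝ => -(2 * c) * t) (-(2 * c)) t := by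
        simpa using (hasDerivAt_id t).const_mul (-(2 * c))
      simpa [mul_comm] using hl.exp
    have := h1.mul (hder t)
    convert this using 1
    · rfl
    · rfl
    · rfl
    ring
  have hanti : Antitone ψ := by
    apply antitone_of_deriv_nonpos
    · intro t; exact (hψder t).differentiableAt
    · intro t
      rw [(hψder t).deriv]
      have := hderle t
      have hexp := Real.exp_pos (-(2 * c) * t)
      nlinarith [hexp.le, mul_le_mul_of_nonneg_left this hexp.le]
  have h01 := hanti (by norm_num : (0:ℝ) ≤ 1)
  have hu0 : u 0 = v := by simp [hu]
  have hu1 : u 1 = exp Y *ᵥ v := by simp [hu]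
  rw [hψ] at h01
  simp only [hu0, hu1, mul_one, mul_zero, Real.exp_zero, one_mul] at h01
  have hfin : Real.exp (-(2 * c)) * (star (exp Y *ᵥ v) ⬝ᵥ (exp Y *ᵥ v)).re ≤ (star v ⬝ᵥ v).re := by
    simpa [hφ, hu0, hu1] using h01
  have hpos := Real.exp_pos (2 * c)
  calc (star (exp Y *ᵥ v) ⬝ᵥ (exp Y *ᵥ v)).re
      = Real.exp (2 * c) * (Real.exp (-(2 * c)) * (star (exp Y *ᵥ v) ⬝ᵥ (exp Y *ᵥ v)).re) := by
        rw [← mul_assoc, ← Real.exp_add]; simp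
    _ ≤ Real.exp (2 * c) * (star v ⬝ᵥ v).re := by
        exact mul_le_mul_of_nonneg_left hfin hpos.le

lemma det_exp_fin3' (X : M3') : (exp X).det = Complex.exp X.trace := by
  set g : ℝ → ℂ := fun t => (exp (t • X)).det with hg
  set f : ℝ → ℂ := fun t => g t * Complex.exp (-(t • X).trace) with hf
  have hgmul : ∀ s t, g (s + t) = g s * g t := by
    intro s t
    have hc : Commute (s • X) (t • X) := (Commute.refl X).smul_left s |>.smul_right t
    rw [hg]
    simp only [add_smul]
    rw [Matrix.exp_add_of_commute _ _ hc, Matrix.det_mul]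
  have hfmul : ∀ s t, f (s + t) = f s * f t := by
    intro s t
    simp only [hf, hgmul s t, Matrix.trace_smul, add_smul, neg_add]
    rw [Complex.exp_add]
    ring
  have hentry : ∀ t i j, HasDerivAt (fun s : ℝ => exp (s • X) i j)
      ((X * exp (t • X)) i j) t := by
    intro t i j
    have hexp : HasDerivAt (fun s : ℝ => exp (s • X)) (X * exp (t • X)) t := by
      exact hasDerivAt_exp_smul_const' X t
    exact (entryCLM i j).hasFDerivAt.comp_hasDerivAt t hexp
  have hg0 : HasDerivAt g X.trace 0 := by
    have h : ∀ s : ℝ, g s =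
        exp (s • X) 0 0 * (exp (s • X) 1 1 * exp (s • X) 2 2
          - exp (s • X) 1 2 * exp (s • X) 2 1)
        - exp (s • X) 0 1 * (exp (s • X) 1 0 * exp (s • X) 2 2
          - exp (s • X) 1 2 * exp (s • X) 2 0)
        + exp (s • X) 0 2 * (exp (s • X) 1 0 * exp (s • X) 2 1
          - exp (s • X) 1 1 * exp (s • X) 2 0) := by
      intro s; simp only [hg]; rw [Matrix.det_fin_three]; ring
    rw [funext h]
    have e := fun i j => hentry 0 i j
    simp only [zero_smul, exp_zero, Matrix.mul_one] at e
    have D := (((e 0 0).mul (((e 1 1).mul (e 2 2)).sub ((e 1 2).mul (e 2 1)))).sub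
      ((e 0 1).mul (((e 1 0).mul (e 2 2)).sub ((e 1 2).mul (e 2 0))))).add
      ((e 0 2).mul (((e 1 0).mul (e 2 1)).sub ((e 1 1).mul (e 2 0))))
    convert D using 1
    · rfl
    · rfl
    simp [Matrix.one_apply, Matrix.trace_fin_three]
    ring
  have hf0 : HasDerivAt f 0 0 := by
    have htr : HasDerivAt (fun t : ℝ => Complex.exp (-(t • X).trace))
        (-X.trace * Complex.exp (-(0 • X).trace)) 0 := by
      have hl : HasDerivAt (fun t : ℝ => -(t • X).trace) (-X.trace) 0 := by
        simp only [Matrix.trace_smul]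
        have h5 : HasDerivAt (fun t : ℝ => t • X.trace) X.trace 0 := by
          simpa using (hasDerivAt_id (0:ℝ)).smul_const X.trace
        simpa [Pi.neg_def] using h5.neg
      simpa [mul_comm] using hl.cexp
    have := hg0.mul htr
    have hgz : g 0 = 1 := by simp [hg]
    convert this using 1
    · rfl
    · rfl
    simp [hgz]
  have hft : ∀ t, HasDerivAt f 0 t := by
    intro t
    have hfun : f = fun u => f t * f (u - t) := by
      funext u
      rw [← hfmul t (u - t)]
      congr 1; ring
    rw [hfun]
    have hsub : HasDerivAt (fun u : ℝ => u - t) 1 t := by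
      simpa using (hasDerivAt_id t).sub_const t
    have hf0' : HasDerivAt f 0 (t - t) := by simpa using hf0
    have h2 : HasDerivAt (fun u : ℝ => f (u - t)) 0 t := by
      simpa [Function.comp_def] using HasDerivAt.scomp (𝕜 := ℝ) t (by simpa using hf0') hsub
    simpa using h2.const_mul (f t)
  have hconst : f 1 = f 0 := by
    have h6 : ∀ x y : ℝ, f x = f y := fun x y =>
      is_const_of_deriv_eq_zero (fun s => (hft s).differentiableAt) (fun s => (hft s).deriv) x y
    exact h6 1 0
  have hf1 : f 0 = 1 := by simp [hf, hg]
  rw [hf1] at hconst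
  simp only [hf] at hconst
  have h2 : g 1 = Complex.exp X.trace := by
    have h3 : g 1 * (Complex.exp X.trace)⁻¹ = 1 := by
      simpa [Complex.exp_neg, one_smul] using hconst
    rwa [mul_inv_eq_one₀ (Complex.exp_ne_zero _)] at h3
  simpa [hg, one_smul] using h2

end Analytic

lemma exp_mulVec_sq_bound (Y : M3') (c : ℝ)
    (hY : ∀ w : Fin 3 → ℂ, (star w ⬝ᵥ ((Y + Yᴴ) *ᵥ w)).re ≤ 2 * c * (star w ⬝ᵥ w).re)
    (v : Fin 3 → ℂ) :
    (star (exp Y *ᵥ v) ⬝ᵥ (exp Y *ᵥ v)).re ≤ Real.exp (2 * c) * (star v ⬝ᵥ v).re :=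
  exp_mulVec_sq_bound' Y c hY v

lemma det_exp_fin3 (X : M3') : (exp X).det = Complex.exp X.trace :=
  det_exp_fin3' X

set_option maxHeartbeats 1600000 in
/-- For nonsingular `Z ∈ ℂ³ˣ³` with polar decomposition `Z = U_p H`, the minimum of
`‖X‖_F²` over unitary `Q` and all logarithms `X` of `Q* Z` equals `‖log H‖_F²`,
attained at `Q = U_p` with `X = log H` the principal logarithm. -/
theorem min_frobSq_log (Z Up H L : Matrix (Fin 3) (Fin 3) ℂ)
    (hZ : IsUnit Z.det)
    (hUp : Up ∈ Matrix.unitaryGroup (Fin 3) ℂ)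
    (hH : H.PosDef) (hpolar : Z = Up * H)
    (hL : L.IsHermitian) (hexpL : NormedSpace.exp L = H) :
    IsLeast {r : ℝ | ∃ Q ∈ Matrix.unitaryGroup (Fin 3) ℂ,
        ∃ X : Matrix (Fin 3) (Fin 3) ℂ,
          NormedSpace.exp X = Qᴴ * Z ∧ r = frobSq X} (frobSq L) ∧
    NormedSpace.exp L = Upᴴ * Z := by
  have hUpUp : Upᴴ * Up = 1 := by
    simpa [Matrix.star_eq_conjTranspose] using Matrix.mem_unitaryGroup_iff'.mp hUp
  have hUpH : Upᴴ * Z = H := by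
    rw [hpolar, ← Matrix.mul_assoc, hUpUp, Matrix.one_mul]
  refine ⟨⟨⟨Up, hUp, L, hexpL.trans hUpH.symm, rfl⟩, ?_⟩, hexpL.trans hUpH.symm⟩
  rintro r ⟨Q, hQ, X, hexpX, rfl⟩
  -- setup
  set T : M3' := X + Xᴴ with hTdef
  have hT : T.IsHermitian := Matrix.isHermitian_add_transpose_self X
  set τ := hT.eigenvalues with hτdef
  set ℓ := hL.eigenvalues with hℓdef
  set V := hL.eigenvectorUnitary with hVdef
  have keyL := hL.spectral_theorem
  have hsVV : (star V : M3') * (V : M3') = 1 := Matrix.UnitaryGroup.star_mul_self V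
  have hVsV : (V : M3') * (star V : M3') = 1 := Matrix.mem_unitaryGroup_iff.mp V.2
  -- H as conjugated diagonal
  have hH1 : H = (V : M3') * Matrix.diagonal (fun i => Complex.exp (ℓ i)) * (star V : M3') := by
    rw [← hexpL, keyL, Unitary.conjStarAlgAut_apply, exp_unitary_conj]
    congr 2
    rw [Matrix.exp_diagonal, Pi.exp_def]
    funext i
    rw [← Complex.exp_eq_exp_ℂ]
    rfl
  have hQQ : Q * Qᴴ = 1 := by
    simpa [Matrix.star_eq_conjTranspose] using Matrix.mem_unitaryGroup_iff.mp hQ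
  have hEE : (NormedSpace.exp X)ᴴ * NormedSpace.exp X
      = (V : M3') * Matrix.diagonal (fun i => Complex.exp (ℓ i) * Complex.exp (ℓ i)) * (star V : M3') := by
    rw [hexpX, Matrix.conjTranspose_mul, Matrix.conjTranspose_conjTranspose]
    rw [Matrix.mul_assoc Zᴴ, ← Matrix.mul_assoc Q, hQQ, Matrix.one_mul]
    rw [hpolar, Matrix.conjTranspose_mul, Matrix.mul_assoc Hᴴ, ← Matrix.mul_assoc Upᴴ,
      hUpUp, Matrix.one_mul, hH.1.eq]
    rw [hH1]
    rw [show ((V : M3') * Matrix.diagonal (fun i => Complex.exp (ℓ i)) * (star V : M3')) *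
        ((V : M3') * Matrix.diagonal (fun i => Complex.exp (ℓ i)) * (star V : M3'))
        = (V : M3') * (Matrix.diagonal (fun i => Complex.exp (ℓ i)) * ((star V : M3') * (V : M3')) *
            Matrix.diagonal (fun i => Complex.exp (ℓ i))) * (star V : M3') from by
      simp only [Matrix.mul_assoc]]
    rw [hsVV, Matrix.mul_one, Matrix.diagonal_mul_diagonal]
  -- upper bounds on eigenvalues of L
  have hup : ∀ c : ℝ, τ 0 ≤ c → τ 1 ≤ c → τ 2 ≤ c → ∀ j, 2 * ℓ j ≤ c := by
    intro c hc0 hc1 hc2 j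
    have hc : ∀ i, τ i ≤ c := by intro i; fin_cases i <;> assumption
    have hray : ∀ w : Fin 3 → ℂ, (star w ⬝ᵥ ((X + Xᴴ) *ᵥ w)).re ≤ 2 * (c/2) * (star w ⬝ᵥ w).re := by
      intro w
      have h := rayleigh_upper T hT c hc w
      rw [← hTdef]
      calc (star w ⬝ᵥ (T *ᵥ w)).re ≤ c * (star w ⬝ᵥ w).re := h
        _ = 2 * (c/2) * (star w ⬝ᵥ w).re := by ring
    have hb := exp_mulVec_sq_bound X (c/2) hray ((V : M3') *ᵥ Pi.single j 1)
    rw [← dot_conjTranspose_mul (NormedSpace.exp X) ((V : M3') *ᵥ Pi.single j 1), hEE] at hb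
    rw [conj_diag_quadform V (fun i => Complex.exp (ℓ i) * Complex.exp (ℓ i)) j,
      unit_col V j] at hb
    rw [← Complex.ofReal_exp, ← Complex.ofReal_mul, Complex.ofReal_re, Complex.one_re,
      mul_one, ← Real.exp_add] at hb
    have := Real.exp_le_exp.mp hb
    linarith
  -- lower bounds on eigenvalues of L
  have hGG : NormedSpace.exp (-X) * NormedSpace.exp (-Xᴴ)
      = (V : M3') * Matrix.diagonal (fun i => Complex.exp (-ℓ i) * Complex.exp (-ℓ i)) * (star V : M3') := by
    have h5 : NormedSpace.exp (-X) * NormedSpace.exp (-Xᴴ)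
        = ((NormedSpace.exp X)ᴴ * NormedSpace.exp X)⁻¹ := by
      rw [Matrix.exp_neg X, Matrix.exp_neg (Xᴴ), ← Matrix.mul_inv_rev,
        ← Matrix.exp_conjTranspose]
    have hrinv : ((NormedSpace.exp X)ᴴ * NormedSpace.exp X) *
        ((V : M3') * Matrix.diagonal (fun i => Complex.exp (-ℓ i) * Complex.exp (-ℓ i)) * (star V : M3')) = 1 := by
      rw [hEE]
      rw [show ((V : M3') * Matrix.diagonal (fun i => Complex.exp (ℓ i) * Complex.exp (ℓ i)) * (star V : M3')) *
          ((V : M3') * Matrix.diagonal (fun i => Complex.exp (-ℓ i) * Complex.exp (-ℓ i)) * (star V : M3'))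
          = (V : M3') * (Matrix.diagonal (fun i => Complex.exp (ℓ i) * Complex.exp (ℓ i)) * ((star V : M3') * (V : M3')) *
              Matrix.diagonal (fun i => Complex.exp (-ℓ i) * Complex.exp (-ℓ i))) * (star V : M3') from by
        simp only [Matrix.mul_assoc]]
      rw [hsVV, Matrix.mul_one, Matrix.diagonal_mul_diagonal]
      rw [show (fun i => Complex.exp (ℓ i) * Complex.exp (ℓ i) * (Complex.exp (-ℓ i) * Complex.exp (-ℓ i)))
          = fun _ => (1:ℂ) from by
        funext i
        rw [show (Complex.exp (ℓ i) * Complex.exp (ℓ i) * (Complex.exp (-ℓ i) * Complex.exp (-ℓ i)))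
            = (Complex.exp (ℓ i) * Complex.exp (-ℓ i)) * (Complex.exp (ℓ i) * Complex.exp (-ℓ i)) from by ring]
        rw [← Complex.exp_add]
        simp]
      rw [Matrix.diagonal_one, Matrix.mul_one, hVsV]
    rw [h5, Matrix.inv_eq_right_inv hrinv]
  have hlo : ∀ c : ℝ, c ≤ τ 0 → c ≤ τ 1 → c ≤ τ 2 → ∀ j, c ≤ 2 * ℓ j := by
    intro c hc0 hc1 hc2 j
    have hc : ∀ i, c ≤ τ i := by intro i; fin_cases i <;> assumption
    have hray : ∀ w : Fin 3 → ℂ, (star w ⬝ᵥ ((-Xᴴ + (-Xᴴ)ᴴ) *ᵥ w)).re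
        ≤ 2 * (-c/2) * (star w ⬝ᵥ w).re := by
      intro w
      have h0 : (-Xᴴ) + (-Xᴴ)ᴴ = -T := by
        rw [Matrix.conjTranspose_neg, Matrix.conjTranspose_conjTranspose, hTdef]
        abel
      rw [h0, Matrix.neg_mulVec, dotProduct_neg, Complex.neg_re]
      have h := rayleigh_lower T hT c hc w
      linarith
    have hb := exp_mulVec_sq_bound (-Xᴴ) (-c/2) hray ((V : M3') *ᵥ Pi.single j 1)
    have hNc : NormedSpace.exp (-Xᴴ) = (NormedSpace.exp (-X))ᴴ := by
      rw [← Matrix.exp_conjTranspose, Matrix.conjTranspose_neg]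
    have hdd := dot_conjTranspose_mul ((NormedSpace.exp (-X))ᴴ) ((V : M3') *ᵥ Pi.single j 1)
    rw [Matrix.conjTranspose_conjTranspose] at hdd
    have hGG' : NormedSpace.exp (-X) * (NormedSpace.exp (-X))ᴴ
        = (V : M3') * Matrix.diagonal (fun i => Complex.exp (-ℓ i) * Complex.exp (-ℓ i)) * (star V : M3') := by
      rw [← hNc]; exact hGG
    rw [hNc, ← hdd, hGG'] at hb
    rw [conj_diag_quadform V (fun i => Complex.exp (-ℓ i) * Complex.exp (-ℓ i)) j,
      unit_col V j] at hb
    rw [← Complex.ofReal_neg, ← Complex.ofReal_exp, ← Complex.ofReal_mul, Complex.ofReal_re,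
      Complex.one_re, mul_one, ← Real.exp_add] at hb
    have := Real.exp_le_exp.mp hb
    linarith
  -- determinant/trace identity
  have hdetE : Matrix.det (NormedSpace.exp X) = Complex.exp (Matrix.trace X) := det_exp_fin3 X
  have habsUp : ‖Matrix.det Up‖ = 1 := abs_det_unitary hUp
  have hdetH : Matrix.det H = ((Real.exp (ℓ 0 + ℓ 1 + ℓ 2) : ℝ) : ℂ) := by
    rw [hH1, Matrix.det_mul, Matrix.det_mul]
    have h1 : Matrix.det (V : M3') * Matrix.det (star V : M3') = 1 := by
      rw [← Matrix.det_mul, hVsV, Matrix.det_one]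
    rw [show Matrix.det (V : M3') * Matrix.det (Matrix.diagonal fun i => Complex.exp (ℓ i)) *
        Matrix.det (star V : M3')
        = Matrix.det (Matrix.diagonal fun i => Complex.exp (ℓ i)) *
          (Matrix.det (V : M3') * Matrix.det (star V : M3')) from by ring, h1, mul_one]
    rw [Matrix.det_diagonal, Fin.prod_univ_three]
    rw [← Complex.ofReal_exp, ← Complex.ofReal_exp, ← Complex.ofReal_exp,
      ← Complex.ofReal_mul, ← Complex.ofReal_mul, ← Real.exp_add, ← Real.exp_add]
  have hsumℓ : (Matrix.trace X).re = ℓ 0 + ℓ 1 + ℓ 2 := by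
    have h1 : ‖Matrix.det (NormedSpace.exp X)‖ = Real.exp ((Matrix.trace X).re) := by
      rw [hdetE, Complex.norm_exp]
    have h2 : Matrix.det (NormedSpace.exp X) = Matrix.det Qᴴ * (Matrix.det Up * Matrix.det H) := by
      rw [hexpX, hpolar, Matrix.det_mul, Matrix.det_mul]
    have h3 : ‖Matrix.det Qᴴ‖ = 1 := by
      rw [Matrix.det_conjTranspose, show star (Matrix.det Q) = (starRingEnd ℂ) (Matrix.det Q) from rfl,
        Complex.norm_conj]
      exact abs_det_unitary hQ
    rw [h2, norm_mul, norm_mul, h3, habsUp, hdetH, one_mul, one_mul, Complex.norm_real, Real.norm_eq_abs,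
      abs_of_pos (Real.exp_pos _)] at h1
    exact (Real.exp_injective h1).symm
  have hsumτ : τ 0 + τ 1 + τ 2 = 2 * (Matrix.trace X).re := by
    have h1 : Matrix.trace T = ((τ 0 + τ 1 + τ 2 : ℝ) : ℂ) := by
      rw [hT.spectral_theorem, Unitary.conjStarAlgAut_apply,
        show (star (hT.eigenvectorUnitary : M3')) = ((star hT.eigenvectorUnitary : M3')) from rfl,
        trace_conj_unitary hT.eigenvectorUnitary, Matrix.trace_diagonal]
      rw [Fin.sum_univ_three]
      push_cast
      rfl
    have h2 : Matrix.trace T = Matrix.trace X + star (Matrix.trace X) := by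
      rw [hTdef, Matrix.trace_add, Matrix.trace_conjTranspose]
    have h3 := congrArg Complex.re (h1.symm.trans h2)
    simp only [Complex.ofReal_re, Complex.add_re, Complex.conj_re] at h3
    rw [show (star (Matrix.trace X)).re = (Matrix.trace X).re from by
      rw [show star (Matrix.trace X) = (starRingEnd ℂ) (Matrix.trace X) from rfl, Complex.conj_re]] at h3
    linarith
  -- frobenius computations
  have hfL : frobSq L = ℓ 0^2 + ℓ 1^2 + ℓ 2^2 := by
    rw [frobSq_hermitian L hL, Fin.sum_univ_three]
  have hfT : frobSq T = τ 0^2 + τ 1^2 + τ 2^2 := by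
    rw [frobSq_hermitian T hT, Fin.sum_univ_three]
  have hfX : frobSq T ≤ 4 * frobSq X := by
    rw [hTdef]; exact frobSq_add_conjTranspose_le X
  -- combine via key3
  have hkey : 4 * (ℓ 0^2 + ℓ 1^2 + ℓ 2^2) ≤ τ 0^2 + τ 1^2 + τ 2^2 := by
    have hsum2 : 2*ℓ 0 + 2*ℓ 1 + 2*ℓ 2 = τ 0 + τ 1 + τ 2 := by
      rw [hsumτ]; linarith [hsumℓ]
    rcases le_total (τ 0) (τ 1) with h1 | h1 <;> rcases le_total (τ 1) (τ 2) with h2 | h2 <;>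
      rcases le_total (τ 0) (τ 2) with h3 | h3
    · have hu := hup (τ 2) (by linarith) (by linarith) (by linarith)
      have hl' := hlo (τ 0) (by linarith) (by linarith) (by linarith)
      have := key3_s14 (τ 0) (τ 2) (τ 1) (2*ℓ 0) (2*ℓ 1) (2*ℓ 2) h1 h2 (hl' 0) (hu 0) (hl' 1) (hu 1)
        (hl' 2) (hu 2) (by linarith)
      nlinarith [this]
    · have hu := hup (τ 2) (by linarith) (by linarith) (by linarith)
      have hl' := hlo (τ 0) (by linarith) (by linarith) (by linarith)
      have := key3_s14 (τ 0) (τ 2) (τ 1) (2*ℓ 0) (2*ℓ 1) (2*ℓ 2) h1 h2 (hl' 0) (hu 0) (hl' 1) (hu 1)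
        (hl' 2) (hu 2) (by linarith)
      nlinarith [this]
    · have hu := hup (τ 1) (by linarith) (by linarith) (by linarith)
      have hl' := hlo (τ 0) (by linarith) (by linarith) (by linarith)
      have := key3_s14 (τ 0) (τ 1) (τ 2) (2*ℓ 0) (2*ℓ 1) (2*ℓ 2) h3 h2 (hl' 0) (hu 0) (hl' 1) (hu 1)
        (hl' 2) (hu 2) (by linarith)
      nlinarith [this]
    · have hu := hup (τ 1) (by linarith) (by linarith) (by linarith)
      have hl' := hlo (τ 2) (by linarith) (by linarith) (by linarith)
      have := key3_s14 (τ 2) (τ 1) (τ 0) (2*ℓ 0) (2*ℓ 1) (2*ℓ 2) h3 h1 (hl' 0) (hu 0) (hl' 1) (hu 1)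
        (hl' 2) (hu 2) (by linarith)
      nlinarith [this]
    · have hu := hup (τ 2) (by linarith) (by linarith) (by linarith)
      have hl' := hlo (τ 1) (by linarith) (by linarith) (by linarith)
      have := key3_s14 (τ 1) (τ 2) (τ 0) (2*ℓ 0) (2*ℓ 1) (2*ℓ 2) h1 h3 (hl' 0) (hu 0) (hl' 1) (hu 1)
        (hl' 2) (hu 2) (by linarith)
      nlinarith [this]
    · have hu := hup (τ 0) (by linarith) (by linarith) (by linarith)
      have hl' := hlo (τ 1) (by linarith) (by linarith) (by linarith)
      have := key3_s14 (τ 1) (τ 0) (τ 2) (2*ℓ 0) (2*ℓ 1) (2*ℓ 2) h2 h3 (hl' 0) (hu 0) (hl' 1) (hu 1)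
        (hl' 2) (hu 2) (by linarith)
      nlinarith [this]
    · have hu := hup (τ 0) (by linarith) (by linarith) (by linarith)
      have hl' := hlo (τ 2) (by linarith) (by linarith) (by linarith)
      have := key3_s14 (τ 2) (τ 0) (τ 1) (2*ℓ 0) (2*ℓ 1) (2*ℓ 2) h2 h1 (hl' 0) (hu 0) (hl' 1) (hu 1)
        (hl' 2) (hu 2) (by linarith)
      nlinarith [this]
    · have hu := hup (τ 0) (by linarith) (by linarith) (by linarith)
      have hl' := hlo (τ 2) (by linarith) (by linarith) (by linarith)
      have := key3_s14 (τ 2) (τ 0) (τ 1) (2*ℓ 0) (2*ℓ 1) (2*ℓ 2) h2 h1 (hl' 0) (hu 0) (hl' 1) (hu 1)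
        (hl' 2) (hu 2) (by linarith)
      nlinarith [this]
  linarith [hfL, hfT, hfX, hkey]
end

section
/- The function g : (1, ∞) → ℝ⁺ defined by g(ξ) = (arcosh ξ)² / (ξ² − 1) is strictly decreasing. -/
/-- Inverse hyperbolic cosine. -/
noncomputable def arcosh (x : ℝ) : ℝ := Real.log (x + Real.sqrt (x ^ 2 - 1))

lemma aux_sinh_lt (t : ℝ) (ht : 0 < t) : Real.sinh t < t * Real.cosh t := by
  have h : StrictMonoOn (fun s : ℝ => s * Real.cosh s - Real.sinh s) (Set.Ici 0) := by
    apply strictMonoOn_of_deriv_pos (convex_Ici 0)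
    · exact ((continuous_id.mul Real.continuous_cosh).sub Real.continuous_sinh).continuousOn
    · intro s hs
      rw [interior_Ici] at hs
      have hd : HasDerivAt (fun s : ℝ => s * Real.cosh s - Real.sinh s)
          (1 * Real.cosh s + s * Real.sinh s - Real.cosh s) s :=
        ((hasDerivAt_id s).mul (Real.hasDerivAt_cosh s)).sub (Real.hasDerivAt_sinh s)
      rw [hd.deriv]
      have hs0 : (0:ℝ) < s := hs
      have hsp := Real.sinh_pos_iff.2 hs0
      nlinarith
  have := h Set.self_mem_Ici (Set.mem_Ici.2 ht.le) ht
  simpa using this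

lemma aux_anti : StrictAntiOn (fun t : ℝ => t / Real.sinh t) (Set.Ioi 0) := by
  apply strictAntiOn_of_deriv_neg (convex_Ioi 0)
  · apply ContinuousOn.div continuous_id.continuousOn Real.continuous_sinh.continuousOn
    intro t ht; exact (Real.sinh_pos_iff.2 ht).ne'
  · intro t ht
    rw [interior_Ioi] at ht
    have hs := Real.sinh_pos_iff.2 ht
    have hd : HasDerivAt (fun s : ℝ => s / Real.sinh s)
        ((1 * Real.sinh t - t * Real.cosh t) / (Real.sinh t) ^ 2) t :=
      (hasDerivAt_id t).div (Real.hasDerivAt_sinh t) hs.ne'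
    rw [hd.deriv]
    apply div_neg_of_neg_of_pos
    · nlinarith [aux_sinh_lt t ht]
    · positivity

lemma arcosh_aux (x : ℝ) (hx : 1 < x) :
    Real.cosh (arcosh x) = x ∧ Real.sinh (arcosh x) = Real.sqrt (x ^ 2 - 1) ∧
      0 < arcosh x := by
  have h1 : 0 < x ^ 2 - 1 := by nlinarith
  have hs : 0 < Real.sqrt (x ^ 2 - 1) := Real.sqrt_pos.2 h1
  have hsq : Real.sqrt (x ^ 2 - 1) ^ 2 = x ^ 2 - 1 := Real.sq_sqrt h1.le
  have hpos : 1 < x + Real.sqrt (x ^ 2 - 1) := by linarith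
  have hexp : Real.exp (arcosh x) = x + Real.sqrt (x ^ 2 - 1) :=
    Real.exp_log (by linarith)
  have hmul : (x - Real.sqrt (x ^ 2 - 1)) * (x + Real.sqrt (x ^ 2 - 1)) = 1 := by
    nlinarith
  have hexpneg : Real.exp (-(arcosh x)) = x - Real.sqrt (x ^ 2 - 1) := by
    rw [Real.exp_neg, hexp]
    exact inv_eq_of_mul_eq_one_left hmul
  refine ⟨?_, ?_, Real.log_pos hpos⟩
  · rw [Real.cosh_eq, hexp, hexpneg]; ring
  · rw [Real.sinh_eq, hexp, hexpneg]; ring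

/-- The function `g(ξ) = (arcosh ξ)² / (ξ² − 1)` is strictly decreasing on `(1, ∞)`. -/
theorem strictAntiOn_arcosh_sq_div : StrictAntiOn
    (fun ξ : ℝ => (arcosh ξ) ^ 2 / (ξ ^ 2 - 1)) (Set.Ioi 1) := by
  intro a ha b hb hab
  simp only [Set.mem_Ioi] at ha hb
  obtain ⟨hca, hsa, hta⟩ := arcosh_aux a ha
  obtain ⟨hcb, hsb, htb⟩ := arcosh_aux b hb
  have hlt : arcosh a < arcosh b := by
    have h : Real.cosh (arcosh a) < Real.cosh (arcosh b) := by rw [hca, hcb]; exact hab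
    rw [Real.cosh_lt_cosh, abs_of_pos hta, abs_of_pos htb] at h
    exact h
  have hspa : 0 < Real.sinh (arcosh a) := Real.sinh_pos_iff.2 hta
  have hspb : 0 < Real.sinh (arcosh b) := Real.sinh_pos_iff.2 htb
  have hanti := aux_anti (Set.mem_Ioi.2 hta) (Set.mem_Ioi.2 htb) hlt
  have key : (arcosh b / Real.sinh (arcosh b)) ^ 2 <
      (arcosh a / Real.sinh (arcosh a)) ^ 2 :=
    pow_lt_pow_left₀ hanti (by positivity) (by norm_num)
  have ea : a ^ 2 - 1 = Real.sinh (arcosh a) ^ 2 := by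
    rw [hsa, Real.sq_sqrt (by nlinarith : (0:ℝ) ≤ a ^ 2 - 1)]
  have eb : b ^ 2 - 1 = Real.sinh (arcosh b) ^ 2 := by
    rw [hsb, Real.sq_sqrt (by nlinarith : (0:ℝ) ≤ b ^ 2 - 1)]
  simp only [ea, eb]
  rw [← div_pow, ← div_pow]
  exact key
end
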